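/- arXiv:1606.07489 — 2 statements merged into one kernel-verified Lean document; each statement's English description precedes it below -/
import Mathlib

section
/- Let A and B be countable structures. For every continuous group homomorphism H : Aut(B) → Aut(A), there is a Borel functor G : Iso(B) → Iso(A) with G(B) = A whose restriction to Aut(B) (the morphisms from B to itself) is H. -/
namespace Paper

/-- A structure in a (countable) relational language with arity function `L`,
with domain `ω`.  `rel i` is the interpretation of the `i`-th relation symbol,
of arity `L i`. -/
structure Str (L : ℕ → ℕ) where
  rel : ∀ i, (Fin (L i) → ℕ) → Bool

/-- `g` is an isomorphism from `M` to `N`. -/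
def IsIso {L : ℕ → ℕ} (M N : Str L) (g : ℕ ≃ ℕ) : Prop :=
  ∀ i (v : Fin (L i) → ℕ), M.rel i v = N.rel i fun k => g (v k)

theorem isIso_refl {L : ℕ → ℕ} (M : Str L) : IsIso M M (Equiv.refl ℕ) := fun _ _ => rfl

/-- The automorphism group of `M`, as a subgroup of `S_∞ = Equiv.Perm ℕ`. -/
def aut {L : ℕ → ℕ} (M : Str L) : Subgroup (Equiv.Perm ℕ) where
  carrier := {g | IsIso M M g}
  one_mem' := isIso_refl M
  mul_mem' := by
    intro a b ha hb i v
    exact (hb i v).trans (ha i fun k => b (v k))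
  inv_mem' := by
    intro a ha i v
    have h := ha i fun k => a⁻¹ (v k)
    simpa using h.symm

theorem mem_aut {L : ℕ → ℕ} {M : Str L} {g : Equiv.Perm ℕ} (h : g ∈ aut M) : IsIso M M g := h

/-- The topology of pointwise convergence on `S_∞ = Equiv.Perm ℕ`, i.e. the topology
induced from Baire space `ω^ω`; automorphism groups of countable structures carry the
subspace topology. -/
instance : TopologicalSpace (Equiv.Perm ℕ) :=
  TopologicalSpace.induced (fun g => (g : ℕ → ℕ)) inferInstance

end Paper
namespace Paper

def Isomorphic {L : ℕ → ℕ} (M N : Str L) : Prop := ∃ g : ℕ ≃ ℕ, IsIso M N g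

/-- The copies of `B`: structures with domain `ω` isomorphic to `B`.  These are the
objects of the category `Iso(B)`; the morphisms are the isomorphisms between copies. -/
abbrev Copy {L : ℕ → ℕ} (B : Str L) := {M : Str L // Isomorphic M B}

def selfCopy {L : ℕ → ℕ} (B : Str L) : Copy B := ⟨B, ⟨Equiv.refl ℕ, isIso_refl B⟩⟩

/-- A functor from `Iso(B)` to `Iso(A)`: it maps copies of `B` to copies of `A` and
isomorphisms between copies of `B` to isomorphisms between the corresponding copies
of `A`, preserving identity and composition (Definition 1.8). -/
structure IsoFunctor {LB LA : ℕ → ℕ} (B : Str LB) (A : Str LA) where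
  obj : Copy B → Copy A
  map : ∀ (M N : Copy B) (g : ℕ ≃ ℕ), IsIso M.1 N.1 g → (ℕ ≃ ℕ)
  map_iso : ∀ M N g hg, IsIso (obj M).1 (obj N).1 (map M N g hg)
  map_id : ∀ (M : Copy B) (h : IsIso M.1 M.1 (Equiv.refl ℕ)),
    map M M (Equiv.refl ℕ) h = Equiv.refl ℕ
  map_comp : ∀ (M N P : Copy B) (g₁ : ℕ ≃ ℕ) (h₁ : IsIso M.1 N.1 g₁)
    (g₂ : ℕ ≃ ℕ) (h₂ : IsIso N.1 P.1 g₂) (h₃ : IsIso M.1 P.1 (g₁.trans g₂)),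
    map M P (g₁.trans g₂) h₃ = (map M N g₁ h₁).trans (map N P g₂ h₂)

/-- Codes of structures with domain `ω` as elements of Cantor space. -/
abbrev ObjCode (L : ℕ → ℕ) := (Σ i : ℕ, (Fin (L i) → ℕ)) → Bool

def codeStr {L : ℕ → ℕ} (M : Str L) : ObjCode L := fun p => M.rel p.1 p.2

/-- A functor is Borel if its action on objects and its action on morphisms are
given by Borel operators on the codes. -/
def IsBorelFunctor {LB LA : ℕ → ℕ} {B : Str LB} {A : Str LA} (F : IsoFunctor B A) : Prop :=
  ∃ (Φ : ObjCode LB → ObjCode LA) (Ψ : ObjCode LB × (ℕ → ℕ) × ObjCode LB → (ℕ → ℕ)),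
    Measurable Φ ∧ Measurable Ψ ∧
    (∀ M : Copy B, codeStr (F.obj M).1 = Φ (codeStr M.1)) ∧
    (∀ M N g hg, ⇑(F.map M N g hg) = Ψ (codeStr M.1, ⇑g, codeStr N.1))

/-- Natural isomorphism of functors `Iso(B) → Iso(A)` (Definition 1.9). -/
def NatIso {LB LA : ℕ → ℕ} {B : Str LB} {A : Str LA} (F G : IsoFunctor B A) : Prop :=
  ∃ η : Copy B → (ℕ ≃ ℕ),
    (∀ M, IsIso (F.obj M).1 (G.obj M).1 (η M)) ∧
    (∀ (M N : Copy B) (g : ℕ ≃ ℕ) (hg : IsIso M.1 N.1 g),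
      (η M).trans (G.map M N g hg) = (F.map M N g hg).trans (η N))

end Paper
namespace Paper

-- === AUXILIARY DEVELOPMENT ===

open Function

/-! ### Basic lemmas about `IsIso` and `Str` -/

theorem isIso_symm {L : ℕ → ℕ} {M N : Str L} {g : ℕ ≃ ℕ} (h : IsIso M N g) :
    IsIso N M g.symm := by
  intro i v
  have h2 := h i fun k => g.symm (v k)
  simpa using h2.symm

theorem isIso_trans {L : ℕ → ℕ} {M N P : Str L} {g₁ g₂ : ℕ ≃ ℕ}
    (h₁ : IsIso M N g₁) (h₂ : IsIso N P g₂) : IsIso M P (g₁.trans g₂) :=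
  fun i v => (h₁ i v).trans (h₂ i _)

theorem Str_ext {L : ℕ → ℕ} {M N : Str L} (h : ∀ i v, M.rel i v = N.rel i v) : M = N := by
  cases M; cases N
  exact congrArg Str.mk (funext fun i => funext fun v => h i v)

theorem codeStr_inj {L : ℕ → ℕ} {M N : Str L} (h : codeStr M = codeStr N) : M = N :=
  Str_ext fun i v => congrFun h ⟨i, v⟩

/-! ### Coding permutations as elements of Baire space -/

/-- Interleaved code of a permutation: even coordinates give the forward map,
odd coordinates the inverse. -/
def zc (g : Equiv.Perm ℕ) : ℕ → ℕ := fun n => if n % 2 = 0 then g (n / 2) else g.symm (n / 2)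

theorem zc_even (g : Equiv.Perm ℕ) (m : ℕ) : zc g (2 * m) = g m := by
  unfold zc
  rw [if_pos (by omega)]
  congr 1
  omega

theorem zc_odd (g : Equiv.Perm ℕ) (m : ℕ) : zc g (2 * m + 1) = g.symm m := by
  unfold zc
  rw [if_neg (by omega)]
  congr 1
  omega

theorem zc_inj : Function.Injective zc := by
  intro g g' h
  apply Equiv.ext
  intro x
  have := congrFun h (2 * x)
  rwa [zc_even, zc_even] at this

/-- From arbitrarily long prefix agreement with codes of permutations, a function
is itself the code of a permutation. -/
theorem exists_perm_of_approx {S : Set (Equiv.Perm ℕ)} {f : ℕ → ℕ}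
    (h : ∀ n, ∃ g ∈ S, ∀ m < n, zc g m = f m) : ∃ g₀ : Equiv.Perm ℕ, zc g₀ = f := by
  have hv : ∀ n, f (2 * f (2 * n) + 1) = n := by
    intro n
    obtain ⟨g, -, hg⟩ := h (max (2 * n + 1) (2 * f (2 * n) + 2))
    have h1 : g n = f (2 * n) := by
      have := hg (2 * n) (by omega); rwa [zc_even] at this
    have h2 : g.symm (f (2 * n)) = f (2 * f (2 * n) + 1) := by
      have := hg (2 * f (2 * n) + 1) (by omega); rwa [zc_odd] at this
    rw [← h2, ← h1, Equiv.symm_apply_apply]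
  have hu : ∀ n, f (2 * f (2 * n + 1)) = n := by
    intro n
    obtain ⟨g, -, hg⟩ := h (max (2 * n + 2) (2 * f (2 * n + 1) + 1))
    have h1 : g.symm n = f (2 * n + 1) := by
      have := hg (2 * n + 1) (by omega); rwa [zc_odd] at this
    have h2 : g (f (2 * n + 1)) = f (2 * f (2 * n + 1)) := by
      have := hg (2 * f (2 * n + 1)) (by omega); rwa [zc_even] at this
    rw [← h2, ← h1, Equiv.apply_symm_apply]
  refine ⟨⟨fun n => f (2 * n), fun n => f (2 * n + 1), fun n => hv n, fun n => hu n⟩, ?_⟩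
  funext m
  rcases Nat.even_or_odd m with ⟨k, hk⟩ | ⟨k, hk⟩
  · have : m = 2 * k := by omega
    subst this
    rw [zc_even]
    rfl
  · subst hk
    rw [zc_odd]
    rfl

/-! ### Lexicographically least elements of finitarily closed sets -/

/-- A set of functions is finitarily closed if it contains every pointwise limit of
finite approximations; this is the same as being closed in Baire space. -/
def FinClosed (C : Set (ℕ → ℕ)) : Prop :=
  ∀ f : ℕ → ℕ, (∀ n, ∃ z ∈ C, ∀ m < n, z m = f m) → f ∈ C

theorem FinClosed.isClosed {C : Set (ℕ → ℕ)} (h : FinClosed C) : IsClosed C := by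
  rw [← isOpen_compl_iff, isOpen_iff_forall_mem_open]
  intro f hf
  have h2 : ¬ ∀ n, ∃ z ∈ C, ∀ m < n, z m = f m := fun hh => hf (h f hh)
  push_neg at h2
  obtain ⟨n, hn⟩ := h2
  refine ⟨{w | ∀ m < n, w m = f m}, ?_, ?_, fun m _ => rfl⟩
  · intro w hw hwC
    obtain ⟨m, hm, hne⟩ := hn w hwC
    exact hne (hw m hm)
  · have : {w : ℕ → ℕ | ∀ m < n, w m = f m}
        = ⋂ m ∈ Finset.range n, (fun w : ℕ → ℕ => w m) ⁻¹' {f m} := by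
      ext w
      simp [Finset.mem_range]
    rw [this]
    exact isOpen_biInter_finset fun m _ =>
      (continuous_apply m).isOpen_preimage _ (isOpen_discrete _)

section LexMin

open Classical

variable (C : Set (ℕ → ℕ))

/-- The invariant for building the leftmost branch. -/
def LexInv (l : List ℕ) : Prop := ∃ z ∈ C, ∀ m < l.length, z m = l.getD m 0

def lexP (l : List ℕ) (c : ℕ) : Prop :=
  ∃ z ∈ C, (∀ m < l.length, z m = l.getD m 0) ∧ z l.length = c

theorem lexP_ex {l : List ℕ} (h : LexInv C l) : ∃ c, lexP C l c := by
  obtain ⟨z, hz, ha⟩ := h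
  exact ⟨z l.length, z, hz, ha, rfl⟩

open Classical in
noncomputable def lexStep (l : {l : List ℕ // LexInv C l}) : {l : List ℕ // LexInv C l} :=
  ⟨l.val ++ [Nat.find (lexP_ex C l.2)], by
    obtain ⟨z, hz, ha, he⟩ := Nat.find_spec (lexP_ex C l.2)
    refine ⟨z, hz, ?_⟩
    intro m hm
    rw [List.length_append, List.length_singleton] at hm
    rcases Nat.lt_or_ge m l.val.length with h1 | h1
    · rw [List.getD_append _ _ _ _ h1]
      exact ha m h1
    · have hme : m = l.val.length := by omega
      subst hme
      rw [List.getD_eq_getElem _ _ (by simp), List.getElem_concat_length rfl]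
      exact he⟩

noncomputable def lexSeq (h0 : C.Nonempty) : ℕ → {l : List ℕ // LexInv C l}
  | 0 => ⟨[], h0.choose, h0.choose_spec, by simp⟩
  | n + 1 => lexStep C (lexSeq h0 n)

theorem lexSeq_length (h0 : C.Nonempty) : ∀ n, (lexSeq C h0 n).val.length = n := by
  intro n
  induction n with
  | zero => rfl
  | succ n ih => simp [lexSeq, lexStep, ih]

/-- Every nonempty finitarily closed subset of Baire space has a lexicographically
least element. -/
theorem exists_lexmin (hC : FinClosed C) (hne : C.Nonempty) :
    ∃ f ∈ C, ∀ z ∈ C, ∀ n, (∀ m < n, f m = z m) → f n ≤ z n := by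
  classical
  set L := lexSeq C hne with hL
  set f : ℕ → ℕ := fun n => (L (n + 1)).val.getD n 0 with hf
  have hpref : ∀ n m, m < n → (L n).val.getD m 0 = f m := by
    intro n
    induction n with
    | zero => intro m hm; omega
    | succ n ih =>
      intro m hm
      rcases Nat.lt_or_ge m n with h1 | h1
      · have : (L (n + 1)).val.getD m 0 = (L n).val.getD m 0 := by
          show (lexStep C (L n)).val.getD m 0 = (L n).val.getD m 0
          rw [show (lexStep C (L n)).val = (L n).val ++ [Nat.find (lexP_ex C (L n).2)] from rfl]
          rw [List.getD_append _ _ _ _ (by rw [lexSeq_length]; exact h1)]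
        rw [this]
        exact ih m h1
      · have hme : m = n := by omega
        subst hme
        rfl
  have happ : ∀ n, ∃ z ∈ C, ∀ m < n, z m = f m := by
    intro n
    obtain ⟨z, hz, ha⟩ := (L n).2
    refine ⟨z, hz, fun m hm => ?_⟩
    rw [← hpref n m hm]
    exact ha m (by rw [lexSeq_length]; exact hm)
  have hmem : f ∈ C := hC f happ
  refine ⟨f, hmem, ?_⟩
  intro z hz n hag
  have hfind : f n = Nat.find (lexP_ex C (L n).2) := by
    show (lexStep C (L n)).val.getD n 0 = _
    rw [show (lexStep C (L n)).val = (L n).val ++ [Nat.find (lexP_ex C (L n).2)] from rfl]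
    rw [List.getD_eq_getElem _ _ (by rw [List.length_append, List.length_singleton, lexSeq_length]; omega),
      List.getElem_concat_length (lexSeq_length C hne n).symm]
  rw [hfind]
  apply Nat.find_min'
  refine ⟨z, hz, ?_, ?_⟩
  · intro m hm
    rw [lexSeq_length C hne n] at hm
    rw [hpref n m hm]
    exact (hag m hm).symm
  · rw [lexSeq_length]

end LexMin



/-! ### The canonical (lex-least) member of each coset -/

variable {LB : ℕ → ℕ}

/-- `g` is the lexicographically least element (in the interleaved coding) of its
right coset modulo `aut B`. -/
def Least (B : Str LB) (g : Equiv.Perm ℕ) : Prop :=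
  ∀ h : Equiv.Perm ℕ, h.trans g.symm ∈ aut B →
    ∀ n, (∀ m < n, zc h m = zc g m) → zc g n ≤ zc h n

theorem least_unique {B : Str LB} {g g' : Equiv.Perm ℕ} (hmem : g'.trans g.symm ∈ aut B)
    (hg : Least B g) (hg' : Least B g') : g = g' := by
  have hmem' : g.trans g'.symm ∈ aut B := by
    have he : g.trans g'.symm = (g'.trans g.symm)⁻¹ := by
      ext x
      simp [Equiv.Perm.inv_def, Equiv.symm_trans_apply]
    rw [he]
    exact inv_mem hmem
  have hzc : ∀ n, zc g n = zc g' n := by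
    intro n
    induction n using Nat.strong_induction_on with
    | _ n ih =>
      refine le_antisymm (hg g' hmem n fun m hm => (ih m hm).symm) (hg' g hmem' n fun m hm => ih m hm)
  exact zc_inj (funext hzc)

theorem finClosed_coset (B : Str LB) (f : Equiv.Perm ℕ) :
    FinClosed {w | ∃ h : Equiv.Perm ℕ, h.trans f.symm ∈ aut B ∧ zc h = w} := by
  intro w hw
  have happ : ∀ n, ∃ h ∈ {h : Equiv.Perm ℕ | h.trans f.symm ∈ aut B}, ∀ m < n, zc h m = w m := by
    intro n
    obtain ⟨z, ⟨h, hh, hzz⟩, hzw⟩ := hw n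
    exact ⟨h, hh, fun m hm => by rw [hzz]; exact hzw m hm⟩
  obtain ⟨h₀, hh₀⟩ := exists_perm_of_approx happ
  refine ⟨h₀, ?_, hh₀⟩
  intro i v
  obtain ⟨h, hh, hagree⟩ := happ ((Finset.univ.sup fun k : Fin (LB i) => 2 * v k + 1) + 1)
  have hv : ∀ k, h (v k) = h₀ (v k) := by
    intro k
    have hb : 2 * v k < (Finset.univ.sup fun k : Fin (LB i) => 2 * v k + 1) + 1 := by
      have := Finset.le_sup (f := fun k : Fin (LB i) => 2 * v k + 1) (Finset.mem_univ k)
      omega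
    have h1 := hagree (2 * v k) hb
    rw [zc_even] at h1
    have h2 := congrFun hh₀ (2 * v k)
    rw [zc_even] at h2
    rw [h1, ← h2]
  rw [mem_aut hh i v]
  congr 1
  funext k
  show f.symm (h (v k)) = f.symm (h₀ (v k))
  rw [hv k]

theorem finClosed_T0 (B : Str LB) :
    FinClosed {z | ∃ g : Equiv.Perm ℕ, zc g = z ∧ Least B g} := by
  intro f hf
  have happ : ∀ n, ∃ g ∈ {g : Equiv.Perm ℕ | Least B g}, ∀ m < n, zc g m = f m := by
    intro n
    obtain ⟨z, ⟨g, hgz, hle⟩, hzf⟩ := hf n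
    exact ⟨g, hle, fun m hm => by rw [hgz]; exact hzf m hm⟩
  obtain ⟨g₀, hg₀⟩ := exists_perm_of_approx happ
  refine ⟨g₀, hg₀, ?_⟩
  intro h hmem n hagr
  by_contra hlt
  push_neg at hlt
  set a : Equiv.Perm ℕ := h.trans g₀.symm with ha
  set N : ℕ := (Finset.range (n + 1)).sup (fun m => 2 * a m + 2) + (n + 1) with hN
  obtain ⟨g, hgle, hfz'⟩ := happ N
  have hfz : ∀ m < N, zc g m = f m := hfz'
  have hNn : n < N := by
    have : n + 1 ≤ N := Nat.le_add_left _ _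
    omega
  have hsup : ∀ m, m ≤ n → 2 * a m + 2 ≤ N := by
    intro m hm
    have := Finset.le_sup (f := fun m => 2 * a m + 2) (Finset.mem_range.2 (by omega : m < n + 1))
    omega
  have key : ∀ m, m ≤ n → zc (a.trans g) m = zc h m := by
    intro m hm
    rcases Nat.even_or_odd m with ⟨k, hk⟩ | ⟨k, hk⟩
    · have hm2 : m = 2 * k := by omega
      subst hm2
      rw [zc_even, zc_even]
      show g (a k) = h k
      have hkn : k ≤ n := by omega
      have h1 : g (a k) = f (2 * a k) := by
        have hb : 2 * a k < N := by have := hsup k hkn; omega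
        have := hfz (2 * a k) hb
        rwa [zc_even] at this
      have h2 : f (2 * a k) = g₀ (a k) := by rw [← hg₀, zc_even]
      have h3 : g₀ (a k) = h k := by rw [ha]; simp
      rw [h1, h2, h3]
    · subst hk
      rw [zc_odd, zc_odd]
      rw [Equiv.symm_trans_apply]
      have h1 : g.symm k = g₀.symm k := by
        have := hfz (2 * k + 1) (by omega)
        rw [zc_odd] at this
        have h2 := congrFun hg₀ (2 * k + 1)
        rw [zc_odd] at h2
        rw [this, ← h2]
      rw [h1, ha]
      simp
  have hmem' : (a.trans g).trans g.symm ∈ aut B := by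
    have he : (a.trans g).trans g.symm = a := by ext x; simp
    rw [he, ha]
    exact hmem
  have hpre : ∀ m < n, zc (a.trans g) m = zc g m := by
    intro m hm
    rw [key m (le_of_lt hm), hagr m hm, hfz m (by omega)]
    exact congrFun hg₀ m
  have hle2 := hgle (a.trans g) hmem' n hpre
  have e1 : zc (a.trans g) n = zc h n := key n le_rfl
  have e2 : zc g n = f n := hfz n hNn
  have e3 : zc g₀ n = f n := congrFun hg₀ n
  omega

theorem exists_least_iso (B : Str LB) (M : Copy B) :
    ∃ g : Equiv.Perm ℕ, IsIso B M.1 g ∧ Least B g := by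
  obtain ⟨e, he⟩ := M.2
  have hf : IsIso B M.1 e.symm := isIso_symm he
  set f := e.symm with hfdef
  have hne : Set.Nonempty {w | ∃ h : Equiv.Perm ℕ, h.trans f.symm ∈ aut B ∧ zc h = w} := by
    refine ⟨zc f, f, ?_, rfl⟩
    rw [Equiv.self_trans_symm]
    exact isIso_refl B
  obtain ⟨w, hwC, hmin⟩ := exists_lexmin _ (finClosed_coset B f) hne
  obtain ⟨g, hgmem, hgw⟩ := hwC
  have hleast : Least B g := by
    intro h hh n hagr
    have hhC : zc h ∈ {w | ∃ h : Equiv.Perm ℕ, h.trans f.symm ∈ aut B ∧ zc h = w} := by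
      refine ⟨h, ?_, rfl⟩
      have he2 : h.trans f.symm = (g.trans f.symm) * (h.trans g.symm) := by
        ext x
        simp [Equiv.Perm.mul_apply]
      rw [he2]
      exact mul_mem hgmem hh
    have := hmin (zc h) hhC n fun m hm => by
      rw [← hgw]
      exact (hagr m hm).symm
    rw [← hgw] at this
    exact this
  refine ⟨g, ?_, hleast⟩
  intro i v
  rw [mem_aut hgmem i v]
  rw [hf i fun k => (g.trans f.symm) (v k)]
  congr 1
  funext k
  simp



variable {LB : ℕ → ℕ}

/-! ### The Borel selection of a canonical isomorphism -/

/-- Pushforward of `B` along a permutation `g`, i.e. the copy of `B` of which `g`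
is an isomorphism from `B`. -/
def pushStr (B : Str LB) (g : Equiv.Perm ℕ) : Str LB :=
  ⟨fun i v => B.rel i fun k => g.symm (v k)⟩

theorem isIso_pushStr (B : Str LB) (g : Equiv.Perm ℕ) : IsIso B (pushStr B g) g := by
  intro i v
  show B.rel i v = B.rel i fun k => g.symm (g (v k))
  congr 1
  funext k
  simp

theorem pushStr_eq_of_isIso {B M : Str LB} {g : Equiv.Perm ℕ} (h : IsIso B M g) :
    pushStr B g = M := by
  apply Str_ext
  intro i v
  show B.rel i (fun k => g.symm (v k)) = M.rel i v
  rw [h i fun k => g.symm (v k)]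
  congr 1
  funext k
  simp

theorem coset_of_push_eq {B : Str LB} {g g' : Equiv.Perm ℕ}
    (h : pushStr B g = pushStr B g') : g'.trans g.symm ∈ aut B := by
  intro i v
  have h2 := congrArg (fun S : Str LB => S.rel i fun k => g' (v k)) h
  simp only [pushStr] at h2
  calc B.rel i v = B.rel i fun k => g'.symm (g' (v k)) := by
        congr 1; funext k; simp
    _ = B.rel i fun k => g.symm (g' (v k)) := h2.symm
    _ = B.rel i fun k => (g'.trans g.symm) (v k) := rfl

/-- The transversal: codes of permutations that are lex-least in their coset. -/
def T0set (B : Str LB) : Set (ℕ → ℕ) := {z | ∃ g : Equiv.Perm ℕ, zc g = z ∧ Least B g}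

/-- The map sending a permutation code to (the code of) the pushforward copy. -/
def Jmap (B : Str LB) : (ℕ → ℕ) → ObjCode LB := fun z p => B.rel p.1 fun k => z (2 * p.2 k + 1)

theorem Jmap_zc (B : Str LB) (g : Equiv.Perm ℕ) : Jmap B (zc g) = codeStr (pushStr B g) := by
  funext p
  show B.rel p.1 (fun k => zc g (2 * p.2 k + 1)) = B.rel p.1 fun k => g.symm (p.2 k)
  congr 1
  funext k
  rw [zc_odd]

theorem Jmap_inj (B : Str LB) : Function.Injective fun z : T0set B => Jmap B z.val := by
  rintro ⟨z, hz⟩ ⟨z', hz'⟩ h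
  obtain ⟨g, hgz, hgl⟩ := hz
  obtain ⟨g', hgz', hgl'⟩ := hz'
  simp only at h
  rw [← hgz, ← hgz', Jmap_zc, Jmap_zc] at h
  have hpush := codeStr_inj h
  have hmem := coset_of_push_eq hpush
  have hgg := least_unique hmem hgl hgl'
  apply Subtype.ext
  show z = z'
  rw [← hgz, ← hgz', hgg]

theorem continuous_Jmap (B : Str LB) : Continuous (Jmap B) := by
  apply continuous_pi
  intro p
  show Continuous fun z : ℕ → ℕ => B.rel p.1 fun k => z (2 * p.2 k + 1)
  have h1 : Continuous fun z : ℕ → ℕ => (fun k : Fin (LB p.1) => z (2 * p.2 k + 1)) :=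
    continuous_pi fun k => continuous_apply _
  exact (continuous_of_discreteTopology (f := B.rel p.1)).comp h1

/-- The Borel selection: from the code of a copy `M` of `B`, produce the
(interleaved code of the) canonical isomorphism from `B` to `M`. -/
noncomputable def sigmaSel (B : Str LB) : ObjCode LB → (ℕ → ℕ) :=
  Function.extend (fun z : T0set B => Jmap B z.val) Subtype.val fun _ _ => 0

theorem measurable_sigmaSel (B : Str LB) : Measurable (sigmaSel B) := by
  have hclosed : IsClosed (T0set B) := (finClosed_T0 B).isClosed
  letI := hclosed.polishSpace
  have hcont : Continuous fun z : T0set B => Jmap B z.val :=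
    (continuous_Jmap B).comp continuous_subtype_val
  exact (hcont.measurableEmbedding (Jmap_inj B)).measurable_extend
    measurable_subtype_coe measurable_const

theorem sigmaSel_spec (B : Str LB) (M : Copy B) :
    ∃ g : Equiv.Perm ℕ, IsIso B M.1 g ∧ sigmaSel B (codeStr M.1) = zc g := by
  obtain ⟨g, hgiso, hgl⟩ := exists_least_iso B M
  refine ⟨g, hgiso, ?_⟩
  have hcode : Jmap B (zc g) = codeStr M.1 := by rw [Jmap_zc, pushStr_eq_of_isIso hgiso]
  have h2 : sigmaSel B (Jmap B ((⟨zc g, g, rfl, hgl⟩ : T0set B) : T0set B).val)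
      = (⟨zc g, g, rfl, hgl⟩ : T0set B).val :=
    (Jmap_inj B).extend_apply _ _ _
  rw [← hcode]
  exact h2



/-! ### Measurability of prefix-determined functions -/

/-- The length-`k` prefix of `f`. -/
def pre (f : ℕ → ℕ) (k : ℕ) : List ℕ := (List.range k).map f

theorem pre_length (f : ℕ → ℕ) (k : ℕ) : (pre f k).length = k := by simp [pre]

theorem pre_getElem (f : ℕ → ℕ) (k m : ℕ) (h : m < (pre f k).length) : (pre f k)[m] = f m := by
  simp [pre]

theorem pre_getD (f : ℕ → ℕ) (k m : ℕ) (h : m < k) : (pre f k).getD m 0 = f m := by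
  rw [List.getD_eq_getElem _ _ (by rw [pre_length]; exact h), pre_getElem]

theorem measurableSet_pre (Q : List ℕ → Prop) (k : ℕ) :
    MeasurableSet {f : ℕ → ℕ | Q (pre f k)} := by
  have hset : {f : ℕ → ℕ | Q (pre f k)}
      = ⋃ s : {s : List ℕ // Q s ∧ s.length = k},
          ⋂ m ∈ Finset.range k, {f : ℕ → ℕ | f m = s.val.getD m 0} := by
    ext f
    simp only [Set.mem_setOf_eq, Set.mem_iUnion, Set.mem_iInter, Finset.mem_range]
    constructor
    · intro hQ
      exact ⟨⟨pre f k, hQ, pre_length f k⟩, fun m hm => (pre_getD f k m hm).symm⟩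
    · rintro ⟨⟨s, hQs, hsk⟩, hs⟩
      have : pre f k = s := by
        apply List.ext_getElem (by rw [pre_length, hsk])
        intro m h1 h2
        rw [pre_getElem]
        rw [pre_length] at h1
        rw [hs m h1, List.getD_eq_getElem _ _ h2]
      rw [this]
      exact hQs
  rw [hset]
  refine MeasurableSet.iUnion fun s => ?_
  refine MeasurableSet.biInter (Set.to_countable _) fun m _ => ?_
  exact measurable_pi_apply m (measurableSet_singleton _)

open Classical in
/-- Search for the least prefix length satisfying `P` and evaluate `V` there. -/
noncomputable def prefixFind (P : List ℕ → Prop) (V : List ℕ → ℕ) (f : ℕ → ℕ) : ℕ :=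
  if ∃ k, P (pre f k) then V (pre f (sInf {k | P (pre f k)})) else 0

theorem measurable_prefixFind (P : List ℕ → Prop) (V : List ℕ → ℕ) :
    Measurable (prefixFind P V) := by
  classical
  have key : ∀ c, MeasurableSet {f : ℕ → ℕ | prefixFind P V f = c} := by
    intro c
    have hE : ∀ k, MeasurableSet {f : ℕ → ℕ | P (pre f k)} := fun k => measurableSet_pre P k
    have hV : ∀ k, MeasurableSet {f : ℕ → ℕ | V (pre f k) = c} :=
      fun k => measurableSet_pre (fun s => V s = c) k
    have hset : {f : ℕ → ℕ | prefixFind P V f = c} =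
        (⋃ k, ({f : ℕ → ℕ | P (pre f k)} ∩ (⋂ j, ⋂ _h : j < k, {f : ℕ → ℕ | P (pre f j)}ᶜ)
          ∩ {f : ℕ → ℕ | V (pre f k) = c}))
        ∪ ((⋂ k, {f : ℕ → ℕ | P (pre f k)}ᶜ) ∩ {_f : ℕ → ℕ | (0 : ℕ) = c}) := by
      ext f
      simp only [Set.mem_setOf_eq, Set.mem_union, Set.mem_iUnion, Set.mem_inter_iff,
        Set.mem_iInter, Set.mem_compl_iff]
      unfold prefixFind
      by_cases h : ∃ k, P (pre f k)
      · rw [if_pos h]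
        have hmem := Nat.sInf_mem h
        constructor
        · intro hv
          exact Or.inl ⟨sInf {k | P (pre f k)}, ⟨hmem, fun j hj => Nat.notMem_of_lt_sInf hj⟩, hv⟩
        · rintro (⟨k, ⟨hk1, hk2⟩, hk3⟩ | ⟨hall, -⟩)
          · have hle : sInf {k | P (pre f k)} ≤ k := Nat.sInf_le hk1
            have hnlt : ¬ sInf {k | P (pre f k)} < k := fun hlt => hk2 _ hlt hmem
            have : sInf {k | P (pre f k)} = k := by omega
            rw [this]
            exact hk3
          · obtain ⟨k, hk⟩ := h
            exact absurd hk (hall k)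
      · rw [if_neg h]
        push_neg at h
        constructor
        · intro h0
          exact Or.inr ⟨h, h0⟩
        · rintro (⟨k, ⟨hk1, -⟩, -⟩ | ⟨-, h0⟩)
          · exact absurd hk1 (h k)
          · exact h0
    rw [hset]
    refine MeasurableSet.union ?_ ?_
    · refine MeasurableSet.iUnion fun k => ?_
      exact (((hE k).inter (MeasurableSet.iInter fun j =>
        MeasurableSet.iInter fun _ => (hE j).compl)).inter (hV k))
    · exact (MeasurableSet.iInter fun k => (hE k).compl).inter (MeasurableSet.const _)
  exact measurable_to_countable fun y => key (prefixFind P V y)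

/-! ### The Borel extension of a continuous homomorphism -/

section Htilde

variable {LA LB : ℕ → ℕ} {A : Str LA} {B : Str LB}

/-- `g` agrees with the finite prefix `s`. -/
def agreeS (s : List ℕ) (g : ℕ → ℕ) : Prop := ∀ m < s.length, g m = s.getD m 0

theorem agreeS_pre_self (f : ℕ → ℕ) (k : ℕ) : agreeS (pre f k) f := by
  intro m hm
  rw [pre_length] at hm
  exact (pre_getD f k m hm).symm

def goodS (B : Str LB) (s : List ℕ) : Prop := ∃ a : ↥(aut B), agreeS s ⇑(a : Equiv.Perm ℕ)

def unifS (H : ↥(aut B) →* ↥(aut A)) (s : List ℕ) (n : ℕ) : Prop :=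
  ∀ a a' : ↥(aut B), agreeS s ⇑(a : Equiv.Perm ℕ) → agreeS s ⇑(a' : Equiv.Perm ℕ) →
    ((H a : Equiv.Perm ℕ) : ℕ → ℕ) n = ((H a' : Equiv.Perm ℕ) : ℕ → ℕ) n

open Classical in
noncomputable def hvalS (H : ↥(aut B) →* ↥(aut A)) (s : List ℕ) (n : ℕ) : ℕ :=
  if h : goodS B s then ((H h.choose : Equiv.Perm ℕ) : ℕ → ℕ) n else 0

theorem hvalS_eq (H : ↥(aut B) →* ↥(aut A)) {s : List ℕ} (h : goodS B s) (n : ℕ) :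
    hvalS H s n = ((H h.choose : Equiv.Perm ℕ) : ℕ → ℕ) n := by
  unfold hvalS
  exact dif_pos h

/-- The search predicate: the prefix is consistent with an automorphism and decides
the value of the image at `n`. -/
abbrev PQ (H : ↥(aut B) →* ↥(aut A)) (n : ℕ) : List ℕ → Prop :=
  fun s => goodS B s ∧ unifS H s n

/-- The Borel extension of `H` to all of Baire space. -/
noncomputable def Htil (H : ↥(aut B) →* ↥(aut A)) (f : ℕ → ℕ) : ℕ → ℕ := fun n =>
  prefixFind (PQ H n) (fun s => hvalS H s n) f

theorem measurable_Htil (H : ↥(aut B) →* ↥(aut A)) : Measurable (Htil H) :=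
  measurable_pi_lambda _ fun n => measurable_prefixFind _ _

theorem Htil_ext (H : ↥(aut B) →* ↥(aut A))
    (hcont : Continuous fun g : ↥(aut B) => ((H g : Equiv.Perm ℕ) : ℕ → ℕ))
    (a : ↥(aut B)) : Htil H ⇑(a : Equiv.Perm ℕ) = ⇑((H a : Equiv.Perm ℕ)) := by
  classical
  funext n
  -- openness of the agreement set
  have hopen : IsOpen {g : ↥(aut B) |
      ((H g : Equiv.Perm ℕ) : ℕ → ℕ) n = ((H a : Equiv.Perm ℕ) : ℕ → ℕ) n} := by
    have hco : Continuous fun g : ↥(aut B) => ((H g : Equiv.Perm ℕ) : ℕ → ℕ) n :=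
      (continuous_apply n).comp hcont
    exact hco.isOpen_preimage {((H a : Equiv.Perm ℕ) : ℕ → ℕ) n} (isOpen_discrete _)
  rw [isOpen_induced_iff] at hopen
  obtain ⟨V, hV, hVeq⟩ := hopen
  rw [isOpen_induced_iff] at hV
  obtain ⟨U, hU, hUeq⟩ := hV
  have haU : ⇑((a : Equiv.Perm ℕ)) ∈ U := by
    have ha1 : a ∈ (Subtype.val : ↥(aut B) → Equiv.Perm ℕ) ⁻¹' V := by
      rw [hVeq]; exact rfl
    have ha2 : (a : Equiv.Perm ℕ) ∈ V := ha1
    rw [← hUeq] at ha2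
    exact ha2
  rw [isOpen_pi_iff] at hU
  obtain ⟨I, u, hIu, hsub⟩ := hU _ haU
  set k := I.sup id + 1 with hk
  have hcyl : ∀ w : ℕ → ℕ, (∀ m < k, w m = ⇑((a : Equiv.Perm ℕ)) m) → w ∈ U := by
    intro w hw
    apply hsub
    intro i hi
    have hik : i < k := by
      have := Finset.le_sup (f := id) hi
      simp only [id] at this
      omega
    rw [hw i hik]
    exact (hIu i hi).2
  -- membership in the open set from membership in U
  have hmem : ∀ a' : ↥(aut B), ⇑((a' : Equiv.Perm ℕ)) ∈ U →
      ((H a' : Equiv.Perm ℕ) : ℕ → ℕ) n = ((H a : Equiv.Perm ℕ) : ℕ → ℕ) n := by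
    intro a' hU'
    have h1 : (a' : Equiv.Perm ℕ) ∈ V := by rw [← hUeq]; exact hU'
    have h2 : a' ∈ (Subtype.val : ↥(aut B) → Equiv.Perm ℕ) ⁻¹' V := h1
    rw [hVeq] at h2
    exact h2
  set f : ℕ → ℕ := ⇑((a : Equiv.Perm ℕ)) with hfd
  have hex : ∃ k', PQ H n (pre f k') := by
    refine ⟨k, ⟨a, agreeS_pre_self f k⟩, ?_⟩
    intro a' a'' h' h''
    have hU' : ⇑((a' : Equiv.Perm ℕ)) ∈ U := by
      apply hcyl
      intro m hm
      rw [h' m (by rw [pre_length]; exact hm)]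
      exact (agreeS_pre_self f k m (by rw [pre_length]; exact hm)).symm
    have hU'' : ⇑((a'' : Equiv.Perm ℕ)) ∈ U := by
      apply hcyl
      intro m hm
      rw [h'' m (by rw [pre_length]; exact hm)]
      exact (agreeS_pre_self f k m (by rw [pre_length]; exact hm)).symm
    rw [hmem a' hU', hmem a'' hU'']
  show prefixFind (PQ H n) (fun s => hvalS H s n) f
      = ((H a : Equiv.Perm ℕ) : ℕ → ℕ) n
  have hpf : prefixFind (PQ H n) (fun s => hvalS H s n) f
      = hvalS H (pre f (sInf {k | PQ H n (pre f k)})) n := by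
    unfold prefixFind
    exact if_pos hex
  rw [hpf]
  have hmem2 : PQ H n (pre f (sInf {k | PQ H n (pre f k)})) := Nat.sInf_mem hex
  obtain ⟨hg, hu⟩ := hmem2
  rw [hvalS_eq H hg n]
  exact hu hg.choose a hg.choose_spec (agreeS_pre_self f _)

end Htilde



theorem measurable_apply_comp {α : Type*} [MeasurableSpace α] {F : α → ℕ → ℕ} {k : α → ℕ}
    (hF : Measurable F) (hk : Measurable k) : Measurable fun a => F a (k a) := by
  have heval : Measurable fun p : (ℕ → ℕ) × ℕ => p.1 p.2 := by
    apply measurable_to_countable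
    intro y
    have hset : (fun p : (ℕ → ℕ) × ℕ => p.1 p.2) ⁻¹' {y.1 y.2}
        = ⋃ j, (Prod.snd ⁻¹' {j}) ∩ ((fun p : (ℕ → ℕ) × ℕ => p.1 j) ⁻¹' {y.1 y.2}) := by
      ext p
      simp only [Set.mem_preimage, Set.mem_singleton_iff, Set.mem_iUnion, Set.mem_inter_iff]
      constructor
      · intro h
        exact ⟨p.2, rfl, h⟩
      · rintro ⟨j, hj, h⟩
        rw [← hj] at h
        exact h
    rw [hset]
    exact MeasurableSet.iUnion fun j =>
      (measurable_snd (measurableSet_singleton j)).inter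
        (((measurable_pi_apply j).comp measurable_fst) (measurableSet_singleton _))
  exact heval.comp (hF.prodMk hk)

variable {LB : ℕ → ℕ}

/-- The canonical isomorphism from `B` onto a copy `M`, read off from the Borel
selection `sigmaSel`. -/
noncomputable def rawSel (B : Str LB) (M : Copy B) : Equiv.Perm ℕ :=
  (sigmaSel_spec B M).choose

theorem rawSel_iso (B : Str LB) (M : Copy B) : IsIso B M.1 (rawSel B M) :=
  (sigmaSel_spec B M).choose_spec.1

theorem rawSel_code (B : Str LB) (M : Copy B) :
    sigmaSel B (codeStr M.1) = zc (rawSel B M) :=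
  (sigmaSel_spec B M).choose_spec.2

/-- The canonical isomorphism, normalized so that the one of `B` itself is the identity. -/
noncomputable def canon (B : Str LB) (M : Copy B) : Equiv.Perm ℕ :=
  (rawSel B (selfCopy B)).symm.trans (rawSel B M)

theorem canon_iso (B : Str LB) (M : Copy B) : IsIso B M.1 (canon B M) :=
  isIso_trans (isIso_symm (rawSel_iso B (selfCopy B))) (rawSel_iso B M)

theorem canon_self (B : Str LB) : canon B (selfCopy B) = Equiv.refl ℕ :=
  Equiv.symm_trans_self _

/-- The automorphism of `B` corresponding to an isomorphism `g : M → N` of copies. -/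
noncomputable def aE (B : Str LB) (M N : Copy B) (g : ℕ ≃ ℕ) : Equiv.Perm ℕ :=
  (canon B M).trans (g.trans (canon B N).symm)

theorem aE_mem {B : Str LB} {M N : Copy B} {g : ℕ ≃ ℕ} (hg : IsIso M.1 N.1 g) :
    aE B M N g ∈ aut B :=
  isIso_trans (canon_iso B M) (isIso_trans hg (isIso_symm (canon_iso B N)))

theorem aE_refl (B : Str LB) (M : Copy B) : aE B M M (Equiv.refl ℕ) = 1 := by
  ext x
  simp [aE]

theorem aE_trans (B : Str LB) (M N P : Copy B) (g₁ g₂ : ℕ ≃ ℕ) :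
    aE B M P (g₁.trans g₂) = aE B N P g₂ * aE B M N g₁ := by
  ext x
  simp [aE, Equiv.Perm.mul_apply]

theorem aE_self (B : Str LB) (g : ℕ ≃ ℕ) :
    aE B (selfCopy B) (selfCopy B) g = g := by
  ext x
  simp [aE, canon_self]

theorem homo_to_functor' (LA LB : ℕ → ℕ) (A : Str LA) (B : Str LB)
    (H : ↥(aut B) →* ↥(aut A))
    (hcont : Continuous fun g : ↥(aut B) => ((H g : Equiv.Perm ℕ) : ℕ → ℕ)) :
    ∃ G : IsoFunctor B A, IsBorelFunctor G ∧ (G.obj (selfCopy B)).1 = A ∧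
      ∀ g : ↥(aut B),
        G.map (selfCopy B) (selfCopy B) (g : Equiv.Perm ℕ) (mem_aut g.2) =
          (H g : Equiv.Perm ℕ) := by
  classical
  refine ⟨{ obj := fun _ => selfCopy A
          , map := fun M N g hg => ((H ⟨aE B M N g, aE_mem hg⟩ : ↥(aut A)) : Equiv.Perm ℕ)
          , map_iso := fun M N g hg => (H ⟨aE B M N g, aE_mem hg⟩).2
          , map_id := ?_
          , map_comp := ?_ }, ?_, rfl, ?_⟩
  · -- map_id
    intro M h
    have h1 : (⟨aE B M M (Equiv.refl ℕ), aE_mem h⟩ : ↥(aut B)) = 1 :=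
      Subtype.ext (aE_refl B M)
    beta_reduce
    rw [h1, map_one]
    rfl
  · -- map_comp
    intro M N P g₁ h₁ g₂ h₂ h₃
    have h1 : (⟨aE B M P (g₁.trans g₂), aE_mem h₃⟩ : ↥(aut B))
        = ⟨aE B N P g₂, aE_mem h₂⟩ * ⟨aE B M N g₁, aE_mem h₁⟩ := by
      apply Subtype.ext
      rw [Subgroup.coe_mul]
      exact aE_trans B M N P g₁ g₂
    beta_reduce
    rw [h1, map_mul]
    rfl
  · -- Borelness
    refine ⟨fun _ => codeStr A,
      fun q => Htil H fun n =>
        (rawSel B (selfCopy B))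
          (sigmaSel B q.2.2
            (2 * (q.2.1 (sigmaSel B q.1 (2 * ((rawSel B (selfCopy B)).symm n)))) + 1)),
      measurable_const, ?_, fun M => rfl, ?_⟩
    · -- measurability of Ψ
      apply (measurable_Htil H).comp
      apply measurable_pi_lambda
      intro n
      have hσ := measurable_sigmaSel B
      have m1 : Measurable fun q : ObjCode LB × (ℕ → ℕ) × ObjCode LB =>
          sigmaSel B q.1 (2 * ((rawSel B (selfCopy B)).symm n)) :=
        (measurable_pi_apply _).comp (hσ.comp measurable_fst)
      have m2 : Measurable fun q : ObjCode LB × (ℕ → ℕ) × ObjCode LB =>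
          q.2.1 (sigmaSel B q.1 (2 * ((rawSel B (selfCopy B)).symm n))) :=
        measurable_apply_comp (measurable_fst.comp measurable_snd) m1
      have m2' : Measurable fun q : ObjCode LB × (ℕ → ℕ) × ObjCode LB =>
          2 * (q.2.1 (sigmaSel B q.1 (2 * ((rawSel B (selfCopy B)).symm n)))) + 1 :=
        (measurable_from_top (f := fun t : ℕ => 2 * t + 1)).comp m2
      have m3 : Measurable fun q : ObjCode LB × (ℕ → ℕ) × ObjCode LB =>
          sigmaSel B q.2.2
            (2 * (q.2.1 (sigmaSel B q.1 (2 * ((rawSel B (selfCopy B)).symm n)))) + 1) :=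
        measurable_apply_comp (hσ.comp (measurable_snd.comp measurable_snd)) m2'
      exact (measurable_from_top (f := ⇑(rawSel B (selfCopy B)))).comp m3
    · -- agreement of Ψ with the functor
      intro M N g hg
      have h1 : ⇑((H ⟨aE B M N g, aE_mem hg⟩ : ↥(aut A)) : Equiv.Perm ℕ)
          = Htil H ⇑(((⟨aE B M N g, aE_mem hg⟩ : ↥(aut B)) : Equiv.Perm ℕ)) :=
        (Htil_ext H hcont _).symm
      rw [h1]
      apply congrArg (Htil H)
      funext n
      show (aE B M N g) n
          = (rawSel B (selfCopy B))
              (sigmaSel B (codeStr N.1)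
                (2 * (g (sigmaSel B (codeStr M.1) (2 * ((rawSel B (selfCopy B)).symm n)))) + 1))
      rw [rawSel_code B M, rawSel_code B N, zc_even, zc_odd]
      simp [aE, canon, Equiv.symm_trans_apply]
  · -- restriction to Aut(B)
    intro g
    have h1 : (⟨aE B (selfCopy B) (selfCopy B) (g : Equiv.Perm ℕ),
        aE_mem (mem_aut g.2)⟩ : ↥(aut B)) = g := Subtype.ext (aE_self B _)
    show ((H _ : ↥(aut A)) : Equiv.Perm ℕ) = _
    rw [h1]



/-- **Theorem 2.1.** For every continuous homomorphism `H : Aut(B) → Aut(A)`, there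
is a Borel functor `G : Iso(B) → Iso(A)` with `G(B) = A` whose restriction to
`Aut(B)` (the morphisms from `B` to itself) is `H`. -/
theorem homo_to_functor (LA LB : ℕ → ℕ) (A : Str LA) (B : Str LB)
    (H : ↥(aut B) →* ↥(aut A))
    (hcont : Continuous fun g : ↥(aut B) => ((H g : Equiv.Perm ℕ) : ℕ → ℕ)) :
    ∃ G : IsoFunctor B A, IsBorelFunctor G ∧ (G.obj (selfCopy B)).1 = A ∧
      ∀ g : ↥(aut B),
        G.map (selfCopy B) (selfCopy B) (g : Equiv.Perm ℕ) (mem_aut g.2) =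
          (H g : Equiv.Perm ℕ) := by
  exact homo_to_functor' LA LB A B H hcont

end Paper
end

section
/- Let A and B be countable structures. For every continuous group isomorphism H : Aut(B) → Aut(A), there is a Borel adjoint equivalence of categories (F, G, η, ε) between Iso(B) and Iso(A) with F(B) = A such that the restriction of F to Aut(B) is H. -/
namespace Paper

/-- An adjoint equivalence between the categories `Iso(B)` and `Iso(A)`
(Definition 1.11): functors in both directions together with natural isomorphisms
`η : id → G∘F` and `ε : id → F∘G` satisfying the triangle identities
`F(η_M) = ε_{F(M)}` and `G(ε_N) = η_{G(N)}`. -/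
structure AdjEquiv {LB LA : ℕ → ℕ} (B : Str LB) (A : Str LA) where
  F : IsoFunctor B A
  G : IsoFunctor A B
  η : Copy B → (ℕ ≃ ℕ)
  ε : Copy A → (ℕ ≃ ℕ)
  η_iso : ∀ M : Copy B, IsIso M.1 (G.obj (F.obj M)).1 (η M)
  ε_iso : ∀ N : Copy A, IsIso N.1 (F.obj (G.obj N)).1 (ε N)
  η_nat : ∀ (M M' : Copy B) (g : ℕ ≃ ℕ) (hg : IsIso M.1 M'.1 g),
    (η M).trans (G.map (F.obj M) (F.obj M') (F.map M M' g hg) (F.map_iso M M' g hg)) =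
      g.trans (η M')
  ε_nat : ∀ (N N' : Copy A) (g : ℕ ≃ ℕ) (hg : IsIso N.1 N'.1 g),
    (ε N).trans (F.map (G.obj N) (G.obj N') (G.map N N' g hg) (G.map_iso N N' g hg)) =
      g.trans (ε N')
  triangleF : ∀ M : Copy B, F.map M (G.obj (F.obj M)) (η M) (η_iso M) = ε (F.obj M)
  triangleG : ∀ N : Copy A, G.map N (F.obj (G.obj N)) (ε N) (ε_iso N) = η (G.obj N)

/-- An adjoint equivalence is Borel if `F`, `G`, `η` and `ε` are given by Borel
operators on the codes. -/
def IsBorelAdjEquiv {LB LA : ℕ → ℕ} {B : Str LB} {A : Str LA} (E : AdjEquiv B A) : Prop :=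
  IsBorelFunctor E.F ∧ IsBorelFunctor E.G ∧
    (∃ u : ObjCode LB → (ℕ → ℕ), Measurable u ∧ ∀ M : Copy B, u (codeStr M.1) = ⇑(E.η M)) ∧
    (∃ v : ObjCode LA → (ℕ → ℕ), Measurable v ∧ ∀ N : Copy A, v (codeStr N.1) = ⇑(E.ε N))

end Paper
namespace Paper

section Sel

variable {L : ℕ → ℕ}

/-- Partial isomorphism condition between the structure coded by `x` and `C`. -/
def PIso (C : Str L) (x : ObjCode L) (p : List (ℕ × ℕ)) : Prop :=
  (∀ q ∈ p, ∀ q' ∈ p, ((q : ℕ × ℕ).1 = (q' : ℕ × ℕ).1 ↔ q.2 = q'.2)) ∧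
  ∀ i (v : Fin (L i) → ℕ × ℕ), (∀ k, v k ∈ p) →
    x ⟨i, fun k => (v k).1⟩ = C.rel i fun k => (v k).2

/-- Ordinal-indexed back-and-forth relations. -/
noncomputable def EE (C : Str L) : Ordinal → ObjCode L → List (ℕ × ℕ) → Prop :=
  Ordinal.lt_wf.fix fun α rec x p =>
    PIso C x p ∧ ∀ β (h : β < α),
      (∀ a : ℕ, ∃ b : ℕ, rec β h x ((a, b) :: p)) ∧
      (∀ b : ℕ, ∃ a : ℕ, rec β h x ((a, b) :: p))

lemma EE_iff (C : Str L) (α : Ordinal) (x : ObjCode L) (p : List (ℕ × ℕ)) :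
    EE C α x p ↔ PIso C x p ∧ ∀ β < α,
      (∀ a : ℕ, ∃ b : ℕ, EE C β x ((a, b) :: p)) ∧
      (∀ b : ℕ, ∃ a : ℕ, EE C β x ((a, b) :: p)) := by
  unfold EE
  rw [WellFounded.fix_eq]

lemma EE_piso {C : Str L} {α x p} (h : EE C α x p) : PIso C x p :=
  ((EE_iff C α x p).1 h).1

lemma EE_mono {C : Str L} {α β : Ordinal} (hβ : β ≤ α) {x p} (h : EE C α x p) :
    EE C β x p := by
  rw [EE_iff] at h ⊢
  exact ⟨h.1, fun γ hγ => h.2 γ (lt_of_lt_of_le hγ hβ)⟩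

lemma EE_graph {C M : Str L} {g : ℕ ≃ ℕ} (hg : IsIso M C g) (α : Ordinal) :
    ∀ p : List (ℕ × ℕ), (∀ q ∈ p, (q : ℕ × ℕ).2 = g q.1) → EE C α (codeStr M) p := by
  induction α using Ordinal.induction with
  | _ α IH =>
    intro p hp
    rw [EE_iff]
    refine ⟨⟨?_, ?_⟩, ?_⟩
    · intro q hq q' hq'
      rw [hp q hq, hp q' hq']
      exact ⟨fun h => by rw [h], fun h => g.injective h⟩
    · intro i v hv
      have hsnd : (fun k => (v k).2) = fun k => g ((v k).1) :=
        funext fun k => hp _ (hv k)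
      rw [hsnd]
      exact hg i _
    · intro β hβ
      constructor
      · intro a
        refine ⟨g a, IH β hβ _ ?_⟩
        intro q hq
        rcases List.mem_cons.1 hq with h | h
        · rw [h]
        · exact hp q h
      · intro b
        refine ⟨g.symm b, IH β hβ _ ?_⟩
        intro q hq
        rcases List.mem_cons.1 hq with h | h
        · rw [h]; simp
        · exact hp q h

lemma EE_translate {C M : Str L} {g : ℕ ≃ ℕ} (hg : IsIso M C g) (α : Ordinal) :
    ∀ p, EE C α (codeStr M) p ↔ EE C α (codeStr C) (p.map fun q => (g q.1, q.2)) := by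
  induction α using Ordinal.induction with
  | _ α IH =>
    intro p
    rw [EE_iff, EE_iff]
    have hpiso : PIso C (codeStr M) p ↔ PIso C (codeStr C) (p.map fun q => (g q.1, q.2)) := by
      constructor
      · rintro ⟨h1, h2⟩
        constructor
        · intro q hq q' hq'
          rcases List.mem_map.1 hq with ⟨r, hr, hrq⟩
          rcases List.mem_map.1 hq' with ⟨r', hr', hrq'⟩
          subst hrq hrq'
          simpa [g.apply_eq_iff_eq] using h1 r hr r' hr'
        · intro i v hv
          choose r hr hrv using fun k => List.mem_map.1 (hv k)
          have h2' := h2 i (fun k => r k) hr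
          have hfst : ∀ k, (v k).1 = g ((r k).1) := fun k => by rw [← hrv k]
          have hsnd : ∀ k, (v k).2 = (r k).2 := fun k => by rw [← hrv k]
          have hMC := hg i (fun k => (r k).1)
          show C.rel i (fun k => (v k).1) = C.rel i (fun k => (v k).2)
          calc C.rel i (fun k => (v k).1) = C.rel i (fun k => g ((r k).1)) := by
                congr 1; exact funext fun k => hfst k
            _ = M.rel i (fun k => (r k).1) := hMC.symm
            _ = C.rel i (fun k => (r k).2) := h2' 
            _ = C.rel i (fun k => (v k).2) := by congr 1; exact funext fun k => (hsnd k).symm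
      · rintro ⟨h1, h2⟩
        constructor
        · intro q hq q' hq'
          have := h1 (g q.1, q.2) (List.mem_map.2 ⟨q, hq, rfl⟩)
            (g q'.1, q'.2) (List.mem_map.2 ⟨q', hq', rfl⟩)
          simpa [g.apply_eq_iff_eq] using this
        · intro i v hv
          have h2' := h2 i (fun k => (g ((v k).1), (v k).2))
            (fun k => List.mem_map.2 ⟨v k, hv k, rfl⟩)
          have hMC := hg i (fun k => (v k).1)
          show M.rel i (fun k => (v k).1) = C.rel i (fun k => (v k).2)
          calc M.rel i (fun k => (v k).1) = C.rel i (fun k => g ((v k).1)) := hMC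
            _ = C.rel i (fun k => (v k).2) := h2'
    constructor
    · rintro ⟨h1, h2⟩
      refine ⟨hpiso.1 h1, ?_⟩
      intro β hβ
      constructor
      · intro a
        obtain ⟨b, hb⟩ := (h2 β hβ).1 (g.symm a)
        refine ⟨b, ?_⟩
        have := (IH β hβ _).1 hb
        simpa using this
      · intro b
        obtain ⟨a, ha⟩ := (h2 β hβ).2 b
        exact ⟨g a, by simpa using (IH β hβ _).1 ha⟩
    · rintro ⟨h1, h2⟩
      refine ⟨hpiso.2 h1, ?_⟩
      intro β hβ
      constructor
      · intro a
        obtain ⟨b, hb⟩ := (h2 β hβ).1 (g a)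
        refine ⟨b, (IH β hβ ((a, b) :: p)).2 ?_⟩
        simpa using hb
      · intro b
        obtain ⟨a, ha⟩ := (h2 β hβ).2 b
        refine ⟨g.symm a, (IH β hβ _).2 ?_⟩
        simpa using ha

end Sel
end Paper
namespace Paper
section Sel2

variable {L : ℕ → ℕ}

lemma exists_stab (C : Str L) :
    ∃ α₀ : Ordinal.{0}, (Set.Iio (α₀ + 1)).Countable ∧
      ∀ p, EE C α₀ (codeStr C) p → EE C (α₀ + 1) (codeStr C) p := by
  classical
  set W : Ordinal := (Order.succ (Cardinal.mk (List (ℕ × ℕ)))).ord with hW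
  have hListmk : Cardinal.mk (List (ℕ × ℕ)) = Cardinal.aleph0 := Cardinal.mk_eq_aleph0 _
  have hWlimit : Order.IsSuccLimit W := Cardinal.isSuccLimit_ord (by
    rw [hListmk]; exact (Order.lt_succ _).le)
  have hkey : ∃ α₀, α₀ < W ∧ ∀ p, EE C α₀ (codeStr C) p → EE C (α₀ + 1) (codeStr C) p := by
    by_contra hcon
    push_neg at hcon
    have hdrop : ∀ α : ↥(Set.Iio W), ∃ p, EE C α (codeStr C) p ∧ ¬ EE C (α + 1) (codeStr C) p := by
      rintro ⟨α, hα⟩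
      obtain ⟨p, hp1, hp2⟩ := hcon α hα
      exact ⟨p, hp1, hp2⟩
    choose f hf1 hf2 using hdrop
    have hinj : Function.Injective (fun α : ↥(Set.Iio W) => ULift.up.{1} (f α)) := by
      intro α β hfab0
      have hfab : f α = f β := congrArg ULift.down hfab0
      by_contra hne
      have hne' : (α : Ordinal) ≠ (β : Ordinal) := fun h => hne (Subtype.ext h)
      rcases lt_or_gt_of_ne hne' with h | h
      · have : EE C ((α : Ordinal) + 1) (codeStr C) (f β) :=
          EE_mono (by rw [Ordinal.add_one_eq_succ]; exact Order.succ_le_of_lt h) (hf1 β)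
        rw [← hfab] at this
        exact hf2 α this
      · have : EE C ((β : Ordinal) + 1) (codeStr C) (f α) :=
          EE_mono (by rw [Ordinal.add_one_eq_succ]; exact Order.succ_le_of_lt h) (hf1 α)
        rw [hfab] at this
        exact hf2 β this
    have hle := Cardinal.mk_le_of_injective hinj
    rw [Cardinal.mk_uLift, Ordinal.mk_Iio_ordinal, hW, Cardinal.card_ord,
      Cardinal.lift_succ] at hle
    exact absurd ((Order.succ_le_iff).1 hle) (lt_irrefl _)
  obtain ⟨α₀, hα₀, hstab⟩ := hkey
  refine ⟨α₀, ?_, hstab⟩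
  have h1 : α₀ + 1 < W := by
    rw [Ordinal.add_one_eq_succ]
    exact hWlimit.succ_lt hα₀
  have h2 : (α₀ + 1).card ≤ Cardinal.aleph0 := by
    have := Cardinal.lt_ord.1 h1
    rw [← hListmk]
    exact Order.lt_succ_iff.1 this
  rw [← Set.countable_coe_iff]
  rw [← Cardinal.mk_le_aleph0_iff, Ordinal.mk_Iio_ordinal]
  calc Cardinal.lift.{1} (α₀ + 1).card ≤ Cardinal.lift.{1} Cardinal.aleph0 :=
        Cardinal.lift_le.2 h2
    _ = Cardinal.aleph0 := Cardinal.lift_aleph0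

lemma EE_ext {C M : Str L} {g : ℕ ≃ ℕ} (hg : IsIso M C g) {α₀ : Ordinal}
    (hstab : ∀ p, EE C α₀ (codeStr C) p → EE C (α₀ + 1) (codeStr C) p)
    {p} (hp : EE C α₀ (codeStr M) p) :
    (∀ a, ∃ b, EE C α₀ (codeStr M) ((a, b) :: p)) ∧
    (∀ b, ∃ a, EE C α₀ (codeStr M) ((a, b) :: p)) := by
  have h1 := (EE_translate hg α₀ p).1 hp
  have h2 := hstab _ h1
  rw [EE_iff] at h2
  have hlt : α₀ < α₀ + 1 := by
    rw [Ordinal.add_one_eq_succ]; exact Order.lt_succ _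
  have h4 := h2.2 α₀ hlt
  constructor
  · intro a
    obtain ⟨b, hb⟩ := h4.1 (g a)
    refine ⟨b, (EE_translate hg α₀ ((a, b) :: p)).2 ?_⟩
    simpa using hb
  · intro b
    obtain ⟨a, ha⟩ := h4.2 b
    refine ⟨g.symm a, (EE_translate hg α₀ _).2 ?_⟩
    simpa using ha

lemma measurableSet_PIso (C : Str L) (p : List (ℕ × ℕ)) :
    MeasurableSet {x : ObjCode L | PIso C x p} := by
  classical
  have : {x : ObjCode L | PIso C x p} =
      {x : ObjCode L | ∀ q ∈ p, ∀ q' ∈ p, ((q : ℕ × ℕ).1 = (q' : ℕ × ℕ).1 ↔ q.2 = q'.2)} ∩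
      ⋂ (i : ℕ) (v : Fin (L i) → ℕ × ℕ),
        {x : ObjCode L | (∀ k, v k ∈ p) →
          x ⟨i, fun k => (v k).1⟩ = C.rel i fun k => (v k).2} := by
    ext x
    simp only [PIso, Set.mem_inter_iff, Set.mem_setOf_eq, Set.mem_iInter] <;> tauto
  rw [this]
  apply MeasurableSet.inter
  · by_cases h : ∀ q ∈ p, ∀ q' ∈ p, ((q : ℕ × ℕ).1 = (q' : ℕ × ℕ).1 ↔ q.2 = q'.2)
    · have heq : {x : ObjCode L | ∀ q ∈ p, ∀ q' ∈ p,
          ((q : ℕ × ℕ).1 = (q' : ℕ × ℕ).1 ↔ q.2 = q'.2)} = Set.univ :=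
        Set.eq_univ_of_forall fun _ => h
      rw [heq]; exact MeasurableSet.univ
    · have heq : {x : ObjCode L | ∀ q ∈ p, ∀ q' ∈ p,
          ((q : ℕ × ℕ).1 = (q' : ℕ × ℕ).1 ↔ q.2 = q'.2)} = ∅ :=
        Set.eq_empty_iff_forall_notMem.2 fun _ hx => h hx
      rw [heq]; exact MeasurableSet.empty
  · refine MeasurableSet.iInter fun i => MeasurableSet.iInter fun v => ?_
    by_cases hv : ∀ k, v k ∈ p
    · have heq : {x : ObjCode L | (∀ k, v k ∈ p) →
          x ⟨i, fun k => (v k).1⟩ = C.rel i fun k => (v k).2} =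
          (fun x : ObjCode L => x ⟨i, fun k => (v k).1⟩) ⁻¹' {C.rel i fun k => (v k).2} := by
        ext x; simp [hv]
      rw [heq]
      exact (measurable_pi_apply _) (measurableSet_singleton _)
    · have heq : {x : ObjCode L | (∀ k, v k ∈ p) →
          x ⟨i, fun k => (v k).1⟩ = C.rel i fun k => (v k).2} = Set.univ :=
        Set.eq_univ_of_forall fun x => fun h' => absurd h' hv
      rw [heq]; exact MeasurableSet.univ

lemma measurableSet_EE (C : Str L) :
    ∀ α : Ordinal, (Set.Iio α).Countable →
      ∀ p, MeasurableSet {x : ObjCode L | EE C α x p} := by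
  intro α
  induction α using Ordinal.induction with
  | _ α IH =>
    intro hcnt p
    have hrw : {x : ObjCode L | EE C α x p} =
        {x : ObjCode L | PIso C x p} ∩
        ⋂ (β : ↥(Set.Iio α)),
          ((⋂ a : ℕ, ⋃ b : ℕ, {x : ObjCode L | EE C β x ((a, b) :: p)}) ∩
           (⋂ b : ℕ, ⋃ a : ℕ, {x : ObjCode L | EE C β x ((a, b) :: p)})) := by
      ext x
      simp only [EE_iff C α, Set.mem_inter_iff, Set.mem_setOf_eq, Set.mem_iInter,
        Set.mem_iUnion, Subtype.forall, Set.mem_Iio] <;> tauto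
    rw [hrw]
    haveI : Countable ↥(Set.Iio α) := hcnt.to_subtype
    refine (measurableSet_PIso C p).inter (MeasurableSet.iInter fun β => ?_)
    have hβcnt : (Set.Iio (β : Ordinal)).Countable :=
      hcnt.mono (Set.Iio_subset_Iio β.2.le)
    exact (MeasurableSet.iInter fun a => MeasurableSet.iUnion fun b =>
        IH β β.2 hβcnt _).inter
      (MeasurableSet.iInter fun b => MeasurableSet.iUnion fun a => IH β β.2 hβcnt _)

end Sel2
end Paper
namespace Paper
section Sel3

variable {L : ℕ → ℕ}

noncomputable def bch (C : Str L) (α₀ : Ordinal) (x : ObjCode L) (a : ℕ)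
    (p : List (ℕ × ℕ)) : ℕ :=
  sInf {b | EE C α₀ x ((a, b) :: p)}

noncomputable def ach (C : Str L) (α₀ : Ordinal) (x : ObjCode L) (b : ℕ)
    (p : List (ℕ × ℕ)) : ℕ :=
  sInf {a | EE C α₀ x ((a, b) :: p)}

noncomputable def steps (C : Str L) (α₀ : Ordinal) (x : ObjCode L) : ℕ → List (ℕ × ℕ)
  | 0 => []
  | n + 1 =>
    if Even n then (n / 2, bch C α₀ x (n / 2) (steps C α₀ x n)) :: steps C α₀ x n
    else (ach C α₀ x (n / 2) (steps C α₀ x n), n / 2) :: steps C α₀ x n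

noncomputable def fwdF (C : Str L) (α₀ : Ordinal) (x : ObjCode L) : ℕ → ℕ :=
  fun a => bch C α₀ x a (steps C α₀ x (2 * a))

noncomputable def bwdF (C : Str L) (α₀ : Ordinal) (x : ObjCode L) : ℕ → ℕ :=
  fun b => ach C α₀ x b (steps C α₀ x (2 * b + 1))

lemma steps_even (C : Str L) (α₀ : Ordinal) (x : ObjCode L) (a : ℕ) :
    steps C α₀ x (2 * a + 1) = (a, fwdF C α₀ x a) :: steps C α₀ x (2 * a) := by
  have he : Even (2 * a) := even_two_mul a
  have hd : 2 * a / 2 = a := by omega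
  simp [steps, he, hd, fwdF]

lemma steps_odd (C : Str L) (α₀ : Ordinal) (x : ObjCode L) (b : ℕ) :
    steps C α₀ x (2 * b + 2) = (bwdF C α₀ x b, b) :: steps C α₀ x (2 * b + 1) := by
  have he : ¬ Even (2 * b + 1) := by simp [Nat.even_add_one, parity_simps]
  have hd : (2 * b + 1) / 2 = b := by omega
  show steps C α₀ x ((2 * b + 1) + 1) = _
  simp [steps, he, hd, bwdF]

lemma steps_subset (C : Str L) (α₀ : Ordinal) (x : ObjCode L) {n m : ℕ} (h : n ≤ m) :
    ∀ q ∈ steps C α₀ x n, q ∈ steps C α₀ x m := by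
  induction m with
  | zero => intro q hq; rwa [Nat.le_zero.1 h] at hq
  | succ m IH =>
    intro q hq
    rcases Nat.lt_or_ge n (m + 1) with h' | h'
    · have hq' : q ∈ steps C α₀ x m := IH (Nat.lt_succ_iff.1 h') q hq
      show q ∈ steps C α₀ x (m + 1)
      by_cases he : Even m <;> simp [steps, he, hq']
    · have : n = m + 1 := le_antisymm h h'
      rwa [this] at hq

section Correct

variable {C M : Str L} {g : ℕ ≃ ℕ} (hg : IsIso M C g) {α₀ : Ordinal.{0}}
  (hstab : ∀ p, EE C α₀ (codeStr C) p → EE C (α₀ + 1) (codeStr C) p)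

include hg hstab

lemma steps_EE : ∀ n, EE C α₀ (codeStr M) (steps C α₀ (codeStr M) n) := by
  intro n
  induction n with
  | zero => exact EE_graph hg α₀ [] (by simp)
  | succ n IH =>
    by_cases he : Even n
    · obtain ⟨b, hb⟩ := (EE_ext hg hstab IH).1 (n / 2)
      have hmem : bch C α₀ (codeStr M) (n / 2) (steps C α₀ (codeStr M) n) ∈
          {b | EE C α₀ (codeStr M) ((n / 2, b) :: steps C α₀ (codeStr M) n)} :=
        Nat.sInf_mem ⟨b, hb⟩
      show EE C α₀ (codeStr M) (steps C α₀ (codeStr M) (n + 1))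
      simpa [steps, he] using hmem
    · obtain ⟨a, ha⟩ := (EE_ext hg hstab IH).2 (n / 2)
      have hmem : ach C α₀ (codeStr M) (n / 2) (steps C α₀ (codeStr M) n) ∈
          {a | EE C α₀ (codeStr M) ((a, n / 2) :: steps C α₀ (codeStr M) n)} :=
        Nat.sInf_mem ⟨a, ha⟩
      show EE C α₀ (codeStr M) (steps C α₀ (codeStr M) (n + 1))
      simpa [steps, he] using hmem

omit hg hstab in
lemma mem_fwd (a : ℕ) :
    (a, fwdF C α₀ (codeStr M) a) ∈ steps C α₀ (codeStr M) (2 * a + 1) := by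
  rw [steps_even]; exact List.mem_cons_self

omit hg hstab in
lemma mem_bwd (b : ℕ) :
    (bwdF C α₀ (codeStr M) b, b) ∈ steps C α₀ (codeStr M) (2 * b + 2) := by
  rw [steps_odd]; exact List.mem_cons_self

lemma steps_func {n : ℕ} {q q' : ℕ × ℕ} (hq : q ∈ steps C α₀ (codeStr M) n)
    (hq' : q' ∈ steps C α₀ (codeStr M) n) : (q.1 = q'.1 ↔ q.2 = q'.2) :=
  (EE_piso (steps_EE hg hstab n)).1 q hq q' hq'

lemma pair_func {n n' : ℕ} {q q' : ℕ × ℕ} (hq : q ∈ steps C α₀ (codeStr M) n)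
    (hq' : q' ∈ steps C α₀ (codeStr M) n') : (q.1 = q'.1 ↔ q.2 = q'.2) := by
  have h1 : q ∈ steps C α₀ (codeStr M) (max n n') :=
    steps_subset C α₀ _ (le_max_left _ _) q hq
  have h2 : q' ∈ steps C α₀ (codeStr M) (max n n') :=
    steps_subset C α₀ _ (le_max_right _ _) q' hq'
  exact steps_func hg hstab h1 h2

lemma fwd_bwd_inv : Function.LeftInverse (bwdF C α₀ (codeStr M)) (fwdF C α₀ (codeStr M)) := by
  intro a
  set b := fwdF C α₀ (codeStr M) a with hb
  have h1 : (a, b) ∈ steps C α₀ (codeStr M) (2 * a + 1) := mem_fwd a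
  have h2 : (bwdF C α₀ (codeStr M) b, b) ∈ steps C α₀ (codeStr M) (2 * b + 2) := mem_bwd b
  exact (pair_func hg hstab h2 h1).2 rfl

lemma bwd_fwd_inv : Function.RightInverse (bwdF C α₀ (codeStr M)) (fwdF C α₀ (codeStr M)) := by
  intro b
  set a := bwdF C α₀ (codeStr M) b with ha
  have h1 : (a, b) ∈ steps C α₀ (codeStr M) (2 * b + 2) := mem_bwd b
  have h2 : (a, fwdF C α₀ (codeStr M) a) ∈ steps C α₀ (codeStr M) (2 * a + 1) := mem_fwd a
  exact (pair_func hg hstab h2 h1).1 rfl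

noncomputable def selEquiv : ℕ ≃ ℕ :=
  ⟨fwdF C α₀ (codeStr M), bwdF C α₀ (codeStr M), fwd_bwd_inv hg hstab, bwd_fwd_inv hg hstab⟩

lemma selEquiv_isIso : IsIso M C (selEquiv hg hstab) := by
  intro i v
  set N : ℕ := 2 * (Finset.univ.sup v) + 1 with hN
  have hmem : ∀ k, (v k, fwdF C α₀ (codeStr M) (v k)) ∈ steps C α₀ (codeStr M) N := by
    intro k
    refine steps_subset C α₀ _ ?_ _ (mem_fwd (v k))
    have : v k ≤ Finset.univ.sup v := Finset.le_sup (Finset.mem_univ k)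
    omega
  have hrel := (EE_piso (steps_EE hg hstab N)).2 i
    (fun k => (v k, fwdF C α₀ (codeStr M) (v k))) hmem
  exact hrel

end Correct

lemma measurableSet_sInf_eq {S : ObjCode L → Set ℕ}
    (h : ∀ b, MeasurableSet {x | b ∈ S x}) (c : ℕ) :
    MeasurableSet {x | sInf (S x) = c} := by
  classical
  have hrw : {x | sInf (S x) = c} =
      (({x | c ∈ S x} ∩ ⋂ (k : ℕ), ⋂ (_ : k < c), {x | k ∈ S x}ᶜ) ∪
       ((⋂ b : ℕ, {x | b ∈ S x}ᶜ) ∩ {x : ObjCode L | c = 0})) := by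
    ext x
    simp only [Set.mem_union, Set.mem_inter_iff, Set.mem_iInter, Set.mem_compl_iff,
      Set.mem_setOf_eq]
    constructor
    · intro hc
      by_cases hne : (S x).Nonempty
      · left
        refine ⟨hc ▸ Nat.sInf_mem hne, fun k hk => Nat.notMem_of_lt_sInf (hc ▸ hk)⟩
      · right
        have : S x = ∅ := Set.not_nonempty_iff_eq_empty.1 hne
        refine ⟨fun b hb => by simp [this] at hb, ?_⟩
        rw [← hc, this, Nat.sInf_empty]
    · rintro (⟨hc, hk⟩ | ⟨hall, hc0⟩)
      · refine le_antisymm (Nat.sInf_le hc) ?_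
        by_contra hlt
        push_neg at hlt
        exact hk _ hlt (Nat.sInf_mem ⟨c, hc⟩)
      · have : S x = ∅ := Set.eq_empty_iff_forall_notMem.2 hall
        rw [this, Nat.sInf_empty, hc0]
  rw [hrw]
  refine MeasurableSet.union ((h c).inter (MeasurableSet.iInter fun k =>
    MeasurableSet.iInter fun _ => (h k).compl)) ?_
  refine (MeasurableSet.iInter fun b => (h b).compl).inter ?_
  by_cases hc0 : c = 0
  · have : {x : ObjCode L | c = 0} = Set.univ := Set.eq_univ_of_forall fun _ => hc0
    rw [this]; exact MeasurableSet.univ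
  · have : {x : ObjCode L | c = 0} = ∅ := Set.eq_empty_iff_forall_notMem.2 fun _ => hc0
    rw [this]; exact MeasurableSet.empty

lemma measurableSet_bch (C : Str L) {α₀ : Ordinal.{0}} (hcnt : (Set.Iio α₀).Countable)
    (a : ℕ) (p : List (ℕ × ℕ)) (c : ℕ) :
    MeasurableSet {x : ObjCode L | bch C α₀ x a p = c} :=
  measurableSet_sInf_eq (fun b => measurableSet_EE C α₀ hcnt ((a, b) :: p)) c

lemma measurableSet_ach (C : Str L) {α₀ : Ordinal.{0}} (hcnt : (Set.Iio α₀).Countable)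
    (b : ℕ) (p : List (ℕ × ℕ)) (c : ℕ) :
    MeasurableSet {x : ObjCode L | ach C α₀ x b p = c} :=
  measurableSet_sInf_eq (fun a => measurableSet_EE C α₀ hcnt ((a, b) :: p)) c

lemma measurableSet_steps (C : Str L) {α₀ : Ordinal.{0}} (hcnt : (Set.Iio α₀).Countable) :
    ∀ (n : ℕ) (s : List (ℕ × ℕ)), MeasurableSet {x : ObjCode L | steps C α₀ x n = s} := by
  classical
  intro n
  induction n with
  | zero =>
    intro s
    by_cases hs : ([] : List (ℕ × ℕ)) = s
    · have : {x : ObjCode L | steps C α₀ x 0 = s} = Set.univ :=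
        Set.eq_univ_of_forall fun _ => hs
      rw [this]; exact MeasurableSet.univ
    · have : {x : ObjCode L | steps C α₀ x 0 = s} = ∅ :=
        Set.eq_empty_iff_forall_notMem.2 fun _ => hs
      rw [this]; exact MeasurableSet.empty
  | succ n IH =>
    intro s
    have hrw : {x : ObjCode L | steps C α₀ x (n + 1) = s} =
        ⋃ (p : List (ℕ × ℕ)), ({x | steps C α₀ x n = p} ∩
          {x : ObjCode L | (if Even n then (n / 2, bch C α₀ x (n / 2) p) :: p
            else (ach C α₀ x (n / 2) p, n / 2) :: p) = s}) := by
      ext x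
      simp only [Set.mem_iUnion, Set.mem_inter_iff, Set.mem_setOf_eq]
      constructor
      · intro hx
        refine ⟨steps C α₀ x n, rfl, ?_⟩
        rw [← hx]
        by_cases he : Even n <;> simp [steps, he]
      · rintro ⟨p, hp, hif⟩
        rw [← hif]
        by_cases he : Even n <;> simp [steps, he, hp]
    rw [hrw]
    refine MeasurableSet.iUnion fun p => (IH p).inter ?_
    by_cases he : Even n
    · simp only [he, if_true]
      by_cases hform : ∃ c, s = (n / 2, c) :: p
      · obtain ⟨c, rfl⟩ := hform
        have : {x : ObjCode L | (n / 2, bch C α₀ x (n / 2) p) :: p = (n / 2, c) :: p} =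
            {x : ObjCode L | bch C α₀ x (n / 2) p = c} := by
          ext x; simp
        rw [this]; exact measurableSet_bch C hcnt _ p c
      · have : {x : ObjCode L | (n / 2, bch C α₀ x (n / 2) p) :: p = s} = ∅ := by
          refine Set.eq_empty_iff_forall_notMem.2 fun x hx => hform ?_
          exact ⟨bch C α₀ x (n / 2) p, hx.symm⟩
        rw [this]; exact MeasurableSet.empty
    · simp only [he, if_false]
      by_cases hform : ∃ c, s = (c, n / 2) :: p
      · obtain ⟨c, rfl⟩ := hform
        have : {x : ObjCode L | (ach C α₀ x (n / 2) p, n / 2) :: p = (c, n / 2) :: p} =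
            {x : ObjCode L | ach C α₀ x (n / 2) p = c} := by
          ext x; simp
        rw [this]; exact measurableSet_ach C hcnt _ p c
      · have : {x : ObjCode L | (ach C α₀ x (n / 2) p, n / 2) :: p = s} = ∅ := by
          refine Set.eq_empty_iff_forall_notMem.2 fun x hx => hform ?_
          exact ⟨ach C α₀ x (n / 2) p, hx.symm⟩
        rw [this]; exact MeasurableSet.empty

lemma measurable_fwdF (C : Str L) {α₀ : Ordinal.{0}} (hcnt : (Set.Iio α₀).Countable) :
    Measurable (fun x : ObjCode L => fwdF C α₀ x) := by
  refine measurable_pi_lambda _ fun a => ?_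
  refine measurable_to_countable fun y => ?_
  have hrw : (fun x : ObjCode L => fwdF C α₀ x a) ⁻¹' {fwdF C α₀ y a} =
      ⋃ (p : List (ℕ × ℕ)), ({x | steps C α₀ x (2 * a) = p} ∩
        {x : ObjCode L | bch C α₀ x a p = fwdF C α₀ y a}) := by
    ext x
    simp only [Set.mem_preimage, Set.mem_singleton_iff, Set.mem_iUnion, Set.mem_inter_iff,
      Set.mem_setOf_eq, fwdF]
    constructor
    · intro hx; exact ⟨steps C α₀ x (2 * a), rfl, hx⟩
    · rintro ⟨p, hp, hb⟩; rw [hp]; exact hb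
  rw [hrw]
  exact MeasurableSet.iUnion fun p =>
    (measurableSet_steps C hcnt _ p).inter (measurableSet_bch C hcnt _ p _)

lemma measurable_bwdF (C : Str L) {α₀ : Ordinal.{0}} (hcnt : (Set.Iio α₀).Countable) :
    Measurable (fun x : ObjCode L => bwdF C α₀ x) := by
  refine measurable_pi_lambda _ fun b => ?_
  refine measurable_to_countable fun y => ?_
  have hrw : (fun x : ObjCode L => bwdF C α₀ x b) ⁻¹' {bwdF C α₀ y b} =
      ⋃ (p : List (ℕ × ℕ)), ({x | steps C α₀ x (2 * b + 1) = p} ∩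
        {x : ObjCode L | ach C α₀ x b p = bwdF C α₀ y b}) := by
    ext x
    simp only [Set.mem_preimage, Set.mem_singleton_iff, Set.mem_iUnion, Set.mem_inter_iff,
      Set.mem_setOf_eq, bwdF]
    constructor
    · intro hx; exact ⟨steps C α₀ x (2 * b + 1), rfl, hx⟩
    · rintro ⟨p, hp, hb⟩; rw [hp]; exact hb
  rw [hrw]
  exact MeasurableSet.iUnion fun p =>
    (measurableSet_steps C hcnt _ p).inter (measurableSet_ach C hcnt _ p _)

/-- The Borel selector of isomorphisms onto the orbit of a countable structure. -/
theorem exists_selector (C : Str L) :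
    ∃ f₁ f₂ : ObjCode L → (ℕ → ℕ), Measurable f₁ ∧ Measurable f₂ ∧
      ∀ M : Str L, Isomorphic M C → ∃ e : ℕ ≃ ℕ,
        ⇑e = f₁ (codeStr M) ∧ ⇑e.symm = f₂ (codeStr M) ∧ IsIso M C e := by
  obtain ⟨α₀, hcnt1, hstab⟩ := exists_stab C
  have hcnt : (Set.Iio α₀).Countable :=
    hcnt1.mono (Set.Iio_subset_Iio (by rw [Ordinal.add_one_eq_succ]; exact Order.le_succ _))
  refine ⟨fun x => fwdF C α₀ x, fun x => bwdF C α₀ x,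
    measurable_fwdF C hcnt, measurable_bwdF C hcnt, ?_⟩
  rintro M ⟨g, hg⟩
  exact ⟨selEquiv hg hstab, rfl, rfl, selEquiv_isIso hg hstab⟩

end Sel3
end Paper
namespace Paper
section HK

variable {LB LA : ℕ → ℕ}

def SGset (B : Str LB) : Set (ℕ → ℕ) :=
  {f | Function.Bijective f ∧ ∀ i v, B.rel i v = B.rel i fun k => f (v k)}

lemma mem_SGset_iff {B : Str LB} (f : ℕ → ℕ) :
    f ∈ SGset B ↔ ∃ a : ↥(aut B), ⇑(a : Equiv.Perm ℕ) = f := by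
  constructor
  · rintro ⟨hbij, hrel⟩
    refine ⟨⟨Equiv.ofBijective f hbij, ?_⟩, rfl⟩
    intro i v
    exact hrel i v
  · rintro ⟨a, rfl⟩
    exact ⟨(a : Equiv.Perm ℕ).bijective, fun i v => a.2 i v⟩

lemma measurableSet_relCond (B : Str LB) (i : ℕ) (v : Fin (LB i) → ℕ) :
    MeasurableSet {f : ℕ → ℕ | B.rel i v = B.rel i fun k => f (v k)} := by
  have hrw : {f : ℕ → ℕ | B.rel i v = B.rel i fun k => f (v k)} =
      ⋃ (w : {w : Fin (LB i) → ℕ // B.rel i v = B.rel i w}),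
        ⋂ (k : Fin (LB i)), {f : ℕ → ℕ | f (v k) = w.1 k} := by
    ext f
    simp only [Set.mem_iUnion, Set.mem_iInter, Set.mem_setOf_eq, Subtype.exists]
    constructor
    · intro h
      exact ⟨fun k => f (v k), h, fun k => rfl⟩
    · rintro ⟨w, hw, hfk⟩
      have : (fun k => f (v k)) = w := funext fun k => hfk k
      rw [this]; exact hw
  rw [hrw]
  refine MeasurableSet.iUnion fun w => MeasurableSet.iInter fun k => ?_
  exact (measurable_pi_apply (v k)) (measurableSet_singleton _)

lemma measurableSet_SGset (B : Str LB) : MeasurableSet (SGset B) := by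
  have hrw : SGset B =
      ((⋂ (m : ℕ) (n : ℕ), {f : ℕ → ℕ | f m = f n → m = n}) ∩
       (⋂ (n : ℕ), ⋃ (m : ℕ), {f : ℕ → ℕ | f m = n})) ∩
      ⋂ (i : ℕ) (v : Fin (LB i) → ℕ), {f : ℕ → ℕ | B.rel i v = B.rel i fun k => f (v k)} := by
    ext f
    simp only [SGset, Set.mem_inter_iff, Set.mem_iInter, Set.mem_iUnion, Set.mem_setOf_eq,
      Function.Bijective, Function.Injective, Function.Surjective]
  rw [hrw]
  refine MeasurableSet.inter (MeasurableSet.inter ?_ ?_) ?_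
  · refine MeasurableSet.iInter fun m => MeasurableSet.iInter fun n => ?_
    by_cases hmn : m = n
    · have : {f : ℕ → ℕ | f m = f n → m = n} = Set.univ :=
        Set.eq_univ_of_forall fun f => fun _ => hmn
      rw [this]; exact MeasurableSet.univ
    · have : {f : ℕ → ℕ | f m = f n → m = n} = {f : ℕ → ℕ | f m = f n}ᶜ := by
        ext f; simp only [Set.mem_setOf_eq, Set.mem_compl_iff]; tauto
      rw [this]
      refine MeasurableSet.compl ?_
      have : {f : ℕ → ℕ | f m = f n} = ⋃ c : ℕ, ({f : ℕ → ℕ | f m = c} ∩ {f : ℕ → ℕ | f n = c}) := by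
        ext f
        constructor
        · intro h
          exact Set.mem_iUnion.2 ⟨f n, ⟨h, rfl⟩⟩
        · intro h
          obtain ⟨c, hc⟩ := Set.mem_iUnion.1 h
          exact hc.1.trans hc.2.symm
      rw [this]
      exact MeasurableSet.iUnion fun c =>
        ((measurable_pi_apply m) (measurableSet_singleton _)).inter
          ((measurable_pi_apply n) (measurableSet_singleton _))
  · exact MeasurableSet.iInter fun n => MeasurableSet.iUnion fun m =>
      (measurable_pi_apply m) (measurableSet_singleton _)
  · exact MeasurableSet.iInter fun i => MeasurableSet.iInter fun v =>
      measurableSet_relCond B i v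

lemma exists_HF_KF (B : Str LB) (A : Str LA) (H : ↥(aut B) ≃* ↥(aut A))
    (hcont : Continuous fun g : ↥(aut B) => ((H g : Equiv.Perm ℕ) : ℕ → ℕ)) :
    ∃ HF KF : (ℕ → ℕ) → (ℕ → ℕ), Measurable HF ∧ Measurable KF ∧
      (∀ a : ↥(aut B), HF ⇑(a : Equiv.Perm ℕ) = ⇑((H a : ↥(aut A)) : Equiv.Perm ℕ)) ∧
      (∀ b : ↥(aut A), KF ⇑(b : Equiv.Perm ℕ) = ⇑((H.symm b : ↥(aut B)) : Equiv.Perm ℕ)) := by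
  classical
  haveI : BorelSpace ↥(SGset B) := Subtype.borelSpace _
  set toAut : ↥(SGset B) → ↥(aut B) := fun f =>
    ⟨Equiv.ofBijective f.1 f.2.1, fun i v => f.2.2 i v⟩ with htoAut
  have htoAutCont : Continuous toAut := by
    apply continuous_induced_rng.2
    apply continuous_induced_rng.2
    exact continuous_subtype_val
  set φ : ↥(SGset B) → (ℕ → ℕ) := fun f => ⇑((H (toAut f) : ↥(aut A)) : Equiv.Perm ℕ) with hφ
  have hφcont : Continuous φ := hcont.comp htoAutCont
  have hφmeas : Measurable φ := hφcont.measurable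
  obtain ⟨HF, hHFmeas, hHFext⟩ :=
    (MeasurableEmbedding.subtype_coe (measurableSet_SGset B)).exists_measurable_extend
      hφmeas (fun _ => ⟨id⟩)
  have hHFspec : ∀ a : ↥(aut B), HF ⇑(a : Equiv.Perm ℕ) = ⇑((H a : ↥(aut A)) : Equiv.Perm ℕ) := by
    intro a
    have hmem : ⇑(a : Equiv.Perm ℕ) ∈ SGset B := (mem_SGset_iff _).2 ⟨a, rfl⟩
    have h1 : HF ⇑(a : Equiv.Perm ℕ) = φ ⟨⇑(a : Equiv.Perm ℕ), hmem⟩ :=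
      congrFun hHFext ⟨⇑(a : Equiv.Perm ℕ), hmem⟩
    rw [h1]
    have h2 : toAut ⟨⇑(a : Equiv.Perm ℕ), hmem⟩ = a := by
      apply Subtype.ext
      apply Equiv.coe_fn_injective
      rfl
    show ⇑((H (toAut ⟨⇑(a : Equiv.Perm ℕ), hmem⟩) : ↥(aut A)) : Equiv.Perm ℕ) = _
    rw [h2]
  -- now the inverse direction
  haveI : StandardBorelSpace ↥(SGset B) := (measurableSet_SGset B).standardBorel
  set j : ↥(SGset B) → (ℕ → ℕ) := fun f => HF f.1 with hj
  have hjmeas : Measurable j := hHFmeas.comp measurable_subtype_coe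
  have hjinj : Function.Injective j := by
    intro q q' hqq'
    obtain ⟨a, ha⟩ := (mem_SGset_iff _).1 q.2
    obtain ⟨a', ha'⟩ := (mem_SGset_iff _).1 q'.2
    rw [hj] at hqq'
    simp only at hqq'
    rw [← ha, ← ha', hHFspec a, hHFspec a'] at hqq'
    have : H a = H a' := Subtype.ext (Equiv.coe_fn_injective hqq')
    have haa' : a = a' := H.injective this
    apply Subtype.ext
    rw [← ha, ← ha', haa']
  have hembj : MeasurableEmbedding j := hjmeas.measurableEmbedding hjinj
  obtain ⟨KF, hKFmeas, hKFext⟩ :=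
    hembj.exists_measurable_extend (measurable_subtype_coe) (fun _ => ⟨id⟩)
  refine ⟨HF, KF, hHFmeas, hKFmeas, hHFspec, ?_⟩
  intro b
  set a : ↥(aut B) := H.symm b with ha
  have hmem : ⇑((a : Equiv.Perm ℕ)) ∈ SGset B := (mem_SGset_iff _).2 ⟨a, rfl⟩
  have hjval : j ⟨⇑(a : Equiv.Perm ℕ), hmem⟩ = ⇑(b : Equiv.Perm ℕ) := by
    rw [hj]
    simp only
    rw [hHFspec a, ha, H.apply_symm_apply]
  have := congrFun hKFext ⟨⇑(a : Equiv.Perm ℕ), hmem⟩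
  simp only [Function.comp_apply] at this
  rw [hjval] at this
  rw [this]

end HK
end Paper
namespace Paper
section Main

variable {LB LA : ℕ → ℕ}

lemma isIso_comp {L : ℕ → ℕ} {M N P : Str L} {g h : ℕ ≃ ℕ}
    (hg : IsIso M N g) (hh : IsIso N P h) : IsIso M P (g.trans h) := by
  intro i v
  rw [hg i v, hh i _]
  rfl

lemma isIso_inv {L : ℕ → ℕ} {M N : Str L} {g : ℕ ≃ ℕ}
    (hg : IsIso M N g) : IsIso N M g.symm := by
  intro i v
  have := hg i fun k => g.symm (v k)
  simp only [Equiv.apply_symm_apply] at this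
  exact this.symm

variable {B : Str LB} {A : Str LA}

def cElt (ρ : Copy B → (ℕ ≃ ℕ)) (hρ : ∀ M, IsIso B M.1 (ρ M))
    (M N : Copy B) (g : ℕ ≃ ℕ) (hg : IsIso M.1 N.1 g) : ↥(aut B) :=
  ⟨(ρ M).trans (g.trans (ρ N).symm),
    isIso_comp (hρ M) (isIso_comp hg (isIso_inv (hρ N)))⟩

lemma cElt_coe (ρ : Copy B → (ℕ ≃ ℕ)) (hρ : ∀ M, IsIso B M.1 (ρ M))
    (M N : Copy B) (g : ℕ ≃ ℕ) (hg : IsIso M.1 N.1 g) (x : ℕ) :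
    ((cElt ρ hρ M N g hg : Equiv.Perm ℕ) : ℕ → ℕ) x = (ρ N).symm (g (ρ M x)) := rfl

lemma cElt_self (ρ : Copy B → (ℕ ≃ ℕ)) (hρ : ∀ M, IsIso B M.1 (ρ M))
    (hρ1 : ρ (selfCopy B) = Equiv.refl ℕ) (g : ℕ ≃ ℕ)
    (hg : IsIso (selfCopy B).1 (selfCopy B).1 g) :
    cElt ρ hρ (selfCopy B) (selfCopy B) g hg = ⟨g, hg⟩ := by
  apply Subtype.ext
  apply Equiv.ext
  intro x
  show (ρ (selfCopy B)).symm (g (ρ (selfCopy B) x)) = g x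
  rw [hρ1]
  rfl

def mkFunctor (H' : ↥(aut B) →* ↥(aut A)) (ρ : Copy B → (ℕ ≃ ℕ))
    (hρ : ∀ M, IsIso B M.1 (ρ M)) : IsoFunctor B A where
  obj := fun _ => selfCopy A
  map := fun M N g hg => ((H' (cElt ρ hρ M N g hg) : ↥(aut A)) : Equiv.Perm ℕ)
  map_iso := fun M N g hg => mem_aut (H' (cElt ρ hρ M N g hg)).2
  map_id := by
    intro M h
    have h1 : cElt ρ hρ M M (Equiv.refl ℕ) h = 1 := by
      apply Subtype.ext
      apply Equiv.ext
      intro x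
      show (ρ M).symm (Equiv.refl ℕ (ρ M x)) = x
      simp
    show ((H' (cElt ρ hρ M M (Equiv.refl ℕ) h) : ↥(aut A)) : Equiv.Perm ℕ) = Equiv.refl ℕ
    rw [h1, map_one]
    rfl
  map_comp := by
    intro M N P g₁ h₁ g₂ h₂ h₃
    have h1 : cElt ρ hρ M P (g₁.trans g₂) h₃ =
        cElt ρ hρ N P g₂ h₂ * cElt ρ hρ M N g₁ h₁ := by
      apply Subtype.ext
      apply Equiv.ext
      intro x
      show (ρ P).symm (g₂ (g₁ (ρ M x))) =
        ((cElt ρ hρ N P g₂ h₂ : Equiv.Perm ℕ) * (cElt ρ hρ M N g₁ h₁ : Equiv.Perm ℕ)) x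
      rw [Equiv.Perm.mul_apply]
      rw [cElt_coe, cElt_coe]
      rw [Equiv.apply_symm_apply]
    show ((H' (cElt ρ hρ M P (g₁.trans g₂) h₃) : ↥(aut A)) : Equiv.Perm ℕ) = _
    rw [h1, map_mul]
    rfl

lemma mkFunctor_obj (H' : ↥(aut B) →* ↥(aut A)) (ρ : Copy B → (ℕ ≃ ℕ))
    (hρ : ∀ M, IsIso B M.1 (ρ M)) (M : Copy B) :
    (mkFunctor H' ρ hρ).obj M = selfCopy A := rfl

lemma mkFunctor_map (H' : ↥(aut B) →* ↥(aut A)) (ρ : Copy B → (ℕ ≃ ℕ))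
    (hρ : ∀ M, IsIso B M.1 (ρ M)) (M N : Copy B) (g : ℕ ≃ ℕ) (hg : IsIso M.1 N.1 g) :
    (mkFunctor H' ρ hρ).map M N g hg =
      ((H' (cElt ρ hρ M N g hg) : ↥(aut A)) : Equiv.Perm ℕ) := rfl

noncomputable def mkAdj (H : ↥(aut B) ≃* ↥(aut A)) (ρ : Copy B → (ℕ ≃ ℕ))
    (σ : Copy A → (ℕ ≃ ℕ)) (hρ : ∀ M, IsIso B M.1 (ρ M)) (hσ : ∀ N, IsIso A N.1 (σ N))
    (hρ1 : ρ (selfCopy B) = Equiv.refl ℕ) (hσ1 : σ (selfCopy A) = Equiv.refl ℕ) :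
    AdjEquiv B A where
  F := mkFunctor H.toMonoidHom ρ hρ
  G := mkFunctor H.symm.toMonoidHom σ hσ
  η := fun M => (ρ M).symm
  ε := fun N => (σ N).symm
  η_iso := fun M => isIso_inv (hρ M)
  ε_iso := fun N => isIso_inv (hσ N)
  η_nat := by
    intro M M' g hg
    set c : ↥(aut B) := cElt ρ hρ M M' g hg with hc
    have h1 : ∀ hq, cElt σ hσ (selfCopy A) (selfCopy A)
        ((H.toMonoidHom c : ↥(aut A)) : Equiv.Perm ℕ) hq = H.toMonoidHom c := by
      intro hq
      rw [cElt_self σ hσ hσ1]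
    show ((ρ M).symm).trans
        ((H.symm.toMonoidHom (cElt σ hσ (selfCopy A) (selfCopy A)
          ((H.toMonoidHom c : ↥(aut A)) : Equiv.Perm ℕ) (mem_aut (H.toMonoidHom c).2)) : ↥(aut B)) : Equiv.Perm ℕ) =
      g.trans ((ρ M').symm)
    rw [h1]
    have h2 : H.symm.toMonoidHom (H.toMonoidHom c) = c := H.symm_apply_apply c
    rw [h2]
    apply Equiv.ext
    intro x
    show ((c : Equiv.Perm ℕ) : ℕ → ℕ) ((ρ M).symm x) = (ρ M').symm (g x)
    rw [hc, cElt_coe, Equiv.apply_symm_apply]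
  ε_nat := by
    intro N N' g hg
    set d : ↥(aut A) := cElt σ hσ N N' g hg with hd
    have h1 : ∀ hq, cElt ρ hρ (selfCopy B) (selfCopy B)
        ((H.symm.toMonoidHom d : ↥(aut B)) : Equiv.Perm ℕ) hq = H.symm.toMonoidHom d := by
      intro hq
      rw [cElt_self ρ hρ hρ1]
    show ((σ N).symm).trans
        ((H.toMonoidHom (cElt ρ hρ (selfCopy B) (selfCopy B)
          ((H.symm.toMonoidHom d : ↥(aut B)) : Equiv.Perm ℕ) (mem_aut (H.symm.toMonoidHom d).2)) : ↥(aut A)) : Equiv.Perm ℕ) =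
      g.trans ((σ N').symm)
    rw [h1]
    have h2 : H.toMonoidHom (H.symm.toMonoidHom d) = d := H.apply_symm_apply d
    rw [h2]
    apply Equiv.ext
    intro x
    show ((d : Equiv.Perm ℕ) : ℕ → ℕ) ((σ N).symm x) = (σ N').symm (g x)
    rw [hd, cElt_coe, Equiv.apply_symm_apply]
  triangleF := by
    intro M
    have h1 : cElt ρ hρ M (selfCopy B) ((ρ M).symm) (isIso_inv (hρ M)) = 1 := by
      apply Subtype.ext
      apply Equiv.ext
      intro x
      show (ρ (selfCopy B)).symm ((ρ M).symm (ρ M x)) = x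
      rw [hρ1]
      simp
    show ((H.toMonoidHom (cElt ρ hρ M (selfCopy B) ((ρ M).symm) _) : ↥(aut A)) :
        Equiv.Perm ℕ) = (σ (selfCopy A)).symm
    rw [h1, map_one, hσ1]
    rfl
  triangleG := by
    intro N
    have h1 : cElt σ hσ N (selfCopy A) ((σ N).symm) (isIso_inv (hσ N)) = 1 := by
      apply Subtype.ext
      apply Equiv.ext
      intro x
      show (σ (selfCopy A)).symm ((σ N).symm (σ N x)) = x
      rw [hσ1]
      simp
    show ((H.symm.toMonoidHom (cElt σ hσ N (selfCopy A) ((σ N).symm) _) : ↥(aut B)) :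
        Equiv.Perm ℕ) = (ρ (selfCopy B)).symm
    rw [h1, map_one, hρ1]
    rfl

lemma measurable_eval : Measurable fun p : (ℕ → ℕ) × ℕ => p.1 p.2 := by
  refine measurable_to_countable fun y => ?_
  have hrw : (fun p : (ℕ → ℕ) × ℕ => p.1 p.2) ⁻¹' {y.1 y.2} =
      ⋃ k : ℕ, ({p : (ℕ → ℕ) × ℕ | p.2 = k} ∩ {p : (ℕ → ℕ) × ℕ | p.1 k = y.1 y.2}) := by
    ext p
    simp only [Set.mem_preimage, Set.mem_singleton_iff, Set.mem_iUnion, Set.mem_inter_iff,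
      Set.mem_setOf_eq]
    constructor
    · intro h; exact ⟨p.2, rfl, h⟩
    · rintro ⟨k, hk, h⟩; rw [← hk] at h; exact h
  rw [hrw]
  refine MeasurableSet.iUnion fun k => MeasurableSet.inter ?_ ?_
  · exact measurable_snd (measurableSet_singleton _)
  · exact ((measurable_pi_apply k).comp measurable_fst) (measurableSet_singleton _)

lemma measurable_compApp {α : Type*} [MeasurableSpace α] {F G : α → ℕ → ℕ}
    (hF : Measurable F) (hG : Measurable G) : Measurable fun a => F a ∘ G a := by
  refine measurable_pi_lambda _ fun n => ?_
  have : (fun a => (F a ∘ G a) n) =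
      (fun p : (ℕ → ℕ) × ℕ => p.1 p.2) ∘ fun a => (F a, G a n) := rfl
  rw [this]
  exact measurable_eval.comp (hF.prodMk ((measurable_pi_apply n).comp hG))

end Main
end Paper
namespace Paper

/-- **Theorem 2.5.**  For every continuous group isomorphism `H : Aut(B) → Aut(A)`,
there is a Borel adjoint equivalence of categories `(F, G, η, ε)` between `Iso(B)`
and `Iso(A)` with `F(B) = A` whose restriction to `Aut(B)` is `H`. -/
theorem iso_to_adj_equiv (LA LB : ℕ → ℕ) (A : Str LA) (B : Str LB)
    (H : ↥(aut B) ≃* ↥(aut A))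
    (hcont : Continuous fun g : ↥(aut B) => ((H g : Equiv.Perm ℕ) : ℕ → ℕ)) :
    ∃ E : AdjEquiv B A, IsBorelAdjEquiv E ∧ (E.F.obj (selfCopy B)).1 = A ∧
      ∀ g : ↥(aut B),
        E.F.map (selfCopy B) (selfCopy B) (g : Equiv.Perm ℕ) (mem_aut g.2) =
          (H g : Equiv.Perm ℕ) := by
  classical
  obtain ⟨fB₁, fB₂, hfB₁, hfB₂, hselB⟩ := exists_selector B
  obtain ⟨fA₁, fA₂, hfA₁, hfA₂, hselA⟩ := exists_selector A
  choose eB heB1 heB2 heB3 using fun M : Copy B => hselB M.1 M.2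
  choose eA heA1 heA2 heA3 using fun N : Copy A => hselA N.1 N.2
  obtain ⟨HF, KF, hHF, hKF, hHFspec, hKFspec⟩ := exists_HF_KF B A H hcont
  set a₀ : ℕ ≃ ℕ := eB (selfCopy B) with ha₀
  set c₀ : ℕ ≃ ℕ := eA (selfCopy A) with hc₀
  set ρ : Copy B → (ℕ ≃ ℕ) := fun M => a₀.trans (eB M).symm with hρdef
  set σ : Copy A → (ℕ ≃ ℕ) := fun N => c₀.trans (eA N).symm with hσdef
  have hρ : ∀ M : Copy B, IsIso B M.1 (ρ M) := fun M =>
    isIso_comp (heB3 (selfCopy B)) (isIso_inv (heB3 M))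
  have hσ : ∀ N : Copy A, IsIso A N.1 (σ N) := fun N =>
    isIso_comp (heA3 (selfCopy A)) (isIso_inv (heA3 N))
  have hρ1 : ρ (selfCopy B) = Equiv.refl ℕ := by
    rw [hρdef]
    show a₀.trans (eB (selfCopy B)).symm = Equiv.refl ℕ
    rw [← ha₀]
    exact a₀.self_trans_symm
  have hσ1 : σ (selfCopy A) = Equiv.refl ℕ := by
    rw [hσdef]
    show c₀.trans (eA (selfCopy A)).symm = Equiv.refl ℕ
    rw [← hc₀]
    exact c₀.self_trans_symm
  have hρcoe : ∀ M : Copy B, ∀ x, ρ M x = fB₂ (codeStr M.1) (a₀ x) := by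
    intro M x
    show (eB M).symm (a₀ x) = _
    rw [heB2 M]
  have hρsymmcoe : ∀ M : Copy B, ∀ x, (ρ M).symm x = a₀.symm (fB₁ (codeStr M.1) x) := by
    intro M x
    show (a₀.trans (eB M).symm).symm x = _
    rw [Equiv.symm_trans_apply, Equiv.symm_symm, heB1 M]
  have hσcoe : ∀ N : Copy A, ∀ x, σ N x = fA₂ (codeStr N.1) (c₀ x) := by
    intro N x
    show (eA N).symm (c₀ x) = _
    rw [heA2 N]
  have hσsymmcoe : ∀ N : Copy A, ∀ x, (σ N).symm x = c₀.symm (fA₁ (codeStr N.1) x) := by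
    intro N x
    show (c₀.trans (eA N).symm).symm x = _
    rw [Equiv.symm_trans_apply, Equiv.symm_symm, heA1 N]
  refine ⟨mkAdj H ρ σ hρ hσ hρ1 hσ1, ⟨?_, ?_, ?_, ?_⟩, rfl, ?_⟩
  · -- IsBorelFunctor F
    refine ⟨fun _ => codeStr A,
      fun t => HF ((⇑a₀.symm ∘ fB₁ t.2.2) ∘ (t.2.1 ∘ (fB₂ t.1 ∘ ⇑a₀))),
      measurable_const, ?_, fun M => rfl, ?_⟩
    · refine hHF.comp (measurable_compApp (measurable_compApp measurable_const
        (hfB₁.comp (measurable_snd.comp measurable_snd)))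
        (measurable_compApp (measurable_fst.comp measurable_snd)
          (measurable_compApp (hfB₂.comp measurable_fst) measurable_const)))
    · intro M N g hg
      show ⇑((H (cElt ρ hρ M N g hg) : ↥(aut A)) : Equiv.Perm ℕ) = _
      rw [← hHFspec (cElt ρ hρ M N g hg)]
      have h1 : ⇑((cElt ρ hρ M N g hg : ↥(aut B)) : Equiv.Perm ℕ) =
          (⇑a₀.symm ∘ fB₁ (codeStr N.1)) ∘ (⇑g ∘ (fB₂ (codeStr M.1) ∘ ⇑a₀)) := by
        funext x
        rw [cElt_coe]
        show (ρ N).symm (g (ρ M x)) = _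
        rw [hρcoe M x, hρsymmcoe N]
        rfl
      rw [h1]
  · -- IsBorelFunctor G
    refine ⟨fun _ => codeStr B,
      fun t => KF ((⇑c₀.symm ∘ fA₁ t.2.2) ∘ (t.2.1 ∘ (fA₂ t.1 ∘ ⇑c₀))),
      measurable_const, ?_, fun N => rfl, ?_⟩
    · refine hKF.comp (measurable_compApp (measurable_compApp measurable_const
        (hfA₁.comp (measurable_snd.comp measurable_snd)))
        (measurable_compApp (measurable_fst.comp measurable_snd)
          (measurable_compApp (hfA₂.comp measurable_fst) measurable_const)))
    · intro N N' g hg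
      show ⇑((H.symm (cElt σ hσ N N' g hg) : ↥(aut B)) : Equiv.Perm ℕ) = _
      rw [← hKFspec (cElt σ hσ N N' g hg)]
      have h1 : ⇑((cElt σ hσ N N' g hg : ↥(aut A)) : Equiv.Perm ℕ) =
          (⇑c₀.symm ∘ fA₁ (codeStr N'.1)) ∘ (⇑g ∘ (fA₂ (codeStr N.1) ∘ ⇑c₀)) := by
        funext x
        rw [cElt_coe]
        show (σ N').symm (g (σ N x)) = _
        rw [hσcoe N x, hσsymmcoe N']
        rfl
      rw [h1]
  · -- η is Borel
    refine ⟨fun x => ⇑a₀.symm ∘ fB₁ x, measurable_compApp measurable_const hfB₁, ?_⟩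
    intro M
    show _ = ⇑(ρ M).symm
    funext x
    exact (hρsymmcoe M x).symm
  · -- ε is Borel
    refine ⟨fun x => ⇑c₀.symm ∘ fA₁ x, measurable_compApp measurable_const hfA₁, ?_⟩
    intro N
    show _ = ⇑(σ N).symm
    funext x
    exact (hσsymmcoe N x).symm
  · -- restriction of F to Aut(B) is H
    intro g
    show ((H (cElt ρ hρ (selfCopy B) (selfCopy B) (g : Equiv.Perm ℕ) (mem_aut g.2)) :
        ↥(aut A)) : Equiv.Perm ℕ) = _
    have h1 : cElt ρ hρ (selfCopy B) (selfCopy B) (g : Equiv.Perm ℕ) (mem_aut g.2) = g := by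
      rw [cElt_self ρ hρ hρ1]
    rw [h1]

end Paper
end
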